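/- arXiv:1001.4381 — 7 statements merged into one kernel-verified Lean document; each statement's English description precedes it below -/
import Mathlib

section
/- Let (Σ_d, Σ_s, R_d, R_s) be a stream specification and let t be a ground term of sort s whose root symbol is not ':'. Then there exists a position p ∈ Pos(t) such that t has a redex at p and for all positions p' strictly above p, the root symbol of the subterm t|_{p'} is not ':'. -/
/-- First-order terms over a signature `F` with natural-number variables. -/
inductive Trm (F : Type) : Type
  | var : ℕ → Trm F
  | app : F → List (Trm F) → Trm F

namespace Trm

variable {F : Type}

/-- Application of a substitution to a term. -/
def subst (σ : ℕ → Trm F) : Trm F → Trm F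
  | var n => σ n
  | app f ts => app f (ts.attach.map fun x => subst σ x.1)
decreasing_by have := List.sizeOf_lt_of_mem x.2; simp; omega

/-- The list of variables occurring in a term. -/
def varList : Trm F → List ℕ
  | var n => [n]
  | app _ ts => ts.attach.flatMap fun x => varList x.1
decreasing_by have := List.sizeOf_lt_of_mem x.2; simp; omega

/-- A term is ground if it contains no variables. -/
def Ground (t : Trm F) : Prop := varList t = []

/-- The subterm at a position (a list of argument indices), if it exists. -/
def subtermAt : Trm F → List ℕ → Option (Trm F)
  | t, [] => some t
  | var _, _ :: _ => none
  | app _ ts, i :: p => (ts[i]?).bind fun t => subtermAt t p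

/-- Replacement of the subterm at a position by another term, if the position exists. -/
def replaceAt : Trm F → List ℕ → Trm F → Option (Trm F)
  | _, [], s => some s
  | var _, _ :: _, _ => none
  | app f ts, i :: p, s =>
      (ts[i]?).bind fun t => (replaceAt t p s).map fun t' => app f (ts.set i t')

def IsVar : Trm F → Prop
  | var _ => True
  | app _ _ => False

end Trm

open Trm

variable {F : Type}

/-- A rewrite rule is a pair (lhs, rhs). -/
abbrev Rule (F : Type) := Trm F × Trm F

/-- A term is a redex w.r.t. a TRS `R` if it is an instance of a left-hand side. -/
def IsRedex (R : Set (Rule F)) (t : Trm F) : Prop :=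
  ∃ (l r : Trm F) (σ : ℕ → Trm F), (l, r) ∈ R ∧ t = subst σ l

/-- `t` has a redex at position `p`. -/
def HasRedexAt (R : Set (Rule F)) (t : Trm F) (p : List ℕ) : Prop :=
  ∃ s, subtermAt t p = some s ∧ IsRedex R s

/-- A rewrite step of `R` at position `p`. -/
def RewriteAt (R : Set (Rule F)) (t t' : Trm F) (p : List ℕ) : Prop :=
  ∃ (l r : Trm F) (σ : ℕ → Trm F), (l, r) ∈ R ∧
    subtermAt t p = some (subst σ l) ∧ replaceAt t p (subst σ r) = some t'

/-- A rewrite step of `R` (at some position). -/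
def Rewrite (R : Set (Rule F)) (t t' : Trm F) : Prop := ∃ p, RewriteAt R t t' p

/-- Many-step rewriting. -/
abbrev RewriteStar (R : Set (Rule F)) : Trm F → Trm F → Prop :=
  Relation.ReflTransGen (Rewrite R)

/-- `p` is a strict (proper) prefix of `q`, i.e. position `p` is strictly above `q`. -/
def StrictPref (p q : List ℕ) : Prop := p <+: q ∧ p ≠ q

/-- Two positions are independent (parallel) if neither is a prefix of the other. -/
def Indep (p q : List ℕ) : Prop := ¬ p <+: q ∧ ¬ q <+: p

/-- An outermost rewrite step at position `p`: no redex strictly above `p`. -/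
def OutStepAt (R : Set (Rule F)) (t t' : Trm F) (p : List ℕ) : Prop :=
  RewriteAt R t t' p ∧ ∀ q, StrictPref q p → ¬ HasRedexAt R t q

def OutStep (R : Set (Rule F)) (t t' : Trm F) : Prop := ∃ p, OutStepAt R t t' p

/-- A non-outermost rewrite step at position `p`: some redex strictly above `p`. -/
def NonOutStepAt (R : Set (Rule F)) (t t' : Trm F) (p : List ℕ) : Prop :=
  RewriteAt R t t' p ∧ ∃ q, StrictPref q p ∧ HasRedexAt R t q

def NonOutStep (R : Set (Rule F)) (t t' : Trm F) : Prop := ∃ p, NonOutStepAt R t t' p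

/-- A sequence of rewrite steps at the listed positions. -/
inductive StepsAt (R : Set (Rule F)) : Trm F → Trm F → List (List ℕ) → Prop
  | nil (t) : StepsAt R t t []
  | cons {t t' t'' p ps} : RewriteAt R t t' p → StepsAt R t' t'' ps →
      StepsAt R t t'' (p :: ps)

/-- A parallel rewrite step: contraction of redexes at pairwise independent positions. -/
def ParStep (R : Set (Rule F)) (t t' : Trm F) : Prop :=
  ∃ ps : List (List ℕ), ps.Pairwise Indep ∧ StepsAt R t t' ps

/-- A parallel step all of whose contracted positions are non-outermost in the source,
i.e. each contracted redex lies strictly below another redex. -/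
def ParNonOut (R : Set (Rule F)) (t t' : Trm F) : Prop :=
  ∃ ps : List (List ℕ), ps.Pairwise Indep ∧
    (∀ p ∈ ps, ∃ q, StrictPref q p ∧ HasRedexAt R t q) ∧ StepsAt R t t' ps

/-- Left-linearity: no variable occurs twice in a left-hand side. -/
def LeftLinear (R : Set (Rule F)) : Prop := ∀ l r, (l, r) ∈ R → (varList l).Nodup

/-- Non-overlapping: the only overlaps between left-hand sides are trivial root
overlaps of a rule with itself. -/
def NonOverlapping (R : Set (Rule F)) : Prop :=
  ∀ l₁ r₁ l₂ r₂, (l₁, r₁) ∈ R → (l₂, r₂) ∈ R →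
    ∀ p s, subtermAt l₁ p = some s → ¬ IsVar s →
      ∀ (σ τ : ℕ → Trm F), subst σ s = subst τ l₂ →
        p = [] ∧ l₁ = l₂ ∧ r₁ = r₂

/-- Orthogonality: left-linear and non-overlapping. -/
def Orthogonal (R : Set (Rule F)) : Prop := LeftLinear R ∧ NonOverlapping R

/-- A symbol `c` is a constructor of `R` if no left-hand side has root `c`. -/
def IsConstructor (R : Set (Rule F)) (c : F) : Prop :=
  ∀ l r, (l, r) ∈ R → ∀ ts, l ≠ app c ts

/-- An infinite outermost reduction (with its sequence of contracted positions). -/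
def InfOutRed (R : Set (Rule F)) (ts : ℕ → Trm F) (ps : ℕ → List ℕ) : Prop :=
  ∀ i, OutStepAt R (ts i) (ts (i + 1)) (ps i)

/-- Balancedness: every redex is eventually reduced or consumed by a step at or
above its position. -/
def BalancedRed (R : Set (Rule F)) (ts : ℕ → Trm F) (ps : ℕ → List ℕ) : Prop :=
  ∀ i q, HasRedexAt R (ts i) q → ∃ j, i ≤ j ∧ ps j <+: q

/-- BalancedRed outermost termination: no infinite balanced outermost reduction. -/
def BalOutTerminating (R : Set (Rule F)) : Prop :=
  ¬ ∃ (ts : ℕ → Trm F) (ps : ℕ → List ℕ), InfOutRed R ts ps ∧ BalancedRed R ts ps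

/-- Outermost termination: no infinite outermost reduction. -/
def OutTerminating (R : Set (Rule F)) : Prop :=
  ¬ ∃ (ts : ℕ → Trm F) (ps : ℕ → List ℕ), InfOutRed R ts ps

/-- A term with the stream constructor ':' (here `c`) at the root. -/
def ConsRooted (c : F) (t : Trm F) : Prop := ∃ u t', t = app c [u, t']

/-- `ConsTower c n t` says `t = u₁ : u₂ : ⋯ : uₙ : t'`. -/
def ConsTower (c : F) : ℕ → Trm F → Prop
  | 0, _ => True
  | n + 1, t => ∃ u t', t = app c [u, t'] ∧ ConsTower c n t'

/-- Productivity of a term: it produces arbitrarily many ':'-elements. -/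
def Productive (R : Set (Rule F)) (c : F) (t : Trm F) : Prop :=
  ∀ n, ∃ t', RewriteStar R t t' ∧ ConsTower c n t'

/-- Well-sortedness of terms, with sorts `Bool` (`false` = data, `true` = stream),
argument/result sorts given by `ar` and variable sorts by `vs`. -/
inductive WS (ar : F → List Bool × Bool) (vs : ℕ → Bool) : Trm F → Bool → Prop
  | var (n) : WS ar vs (var n) (vs n)
  | app (f) (ts : List (Trm F)) : ts.length = (ar f).1.length →
      (∀ (i : ℕ) t b, ts[i]? = some t → (ar f).1[i]? = some b → WS ar vs t b) →
      WS ar vs (app f ts) (ar f).2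

/-- All function symbols of a term belong to the set `S`. -/
inductive SymOver (S : Set F) : Trm F → Prop
  | var (n) : SymOver S (var n)
  | app (f) (ts : List (Trm F)) : f ∈ S → (∀ t ∈ ts, SymOver S t) → SymOver S (app f ts)

/-- A stream specification `(Σ_d, Σ_s, R_d, R_s)` over signature `F`. -/
structure StreamSpec (F : Type) where
  /-- argument sorts and result sort of each symbol -/
  ar : F → List Bool × Bool
  /-- sorts of variables -/
  vs : ℕ → Bool
  /-- the stream constructor ':' of type d × s → s -/
  cons : F
  cons_ar : ar cons = ([false, true], true)
  /-- the data signature Σ_d -/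
  Sd : Set F
  /-- the stream signature Σ_s -/
  Ss : Set F
  cons_not_d : cons ∉ Sd
  cons_not_s : cons ∉ Ss
  d_sorts : ∀ f ∈ Sd, (∀ b ∈ (ar f).1, b = false) ∧ (ar f).2 = false
  s_res : ∀ f ∈ Ss, (ar f).2 = true
  /-- the data rules -/
  Rd : Set (Rule F)
  /-- the stream rules -/
  Rs : Set (Rule F)
  Rd_data : ∀ rl ∈ Rd, SymOver Sd rl.1 ∧ SymOver Sd rl.2
  Rd_sorted : ∀ l r, (l, r) ∈ Rd → WS ar vs l false ∧ WS ar vs r false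
  /-- R_d is terminating -/
  Rd_term : WellFounded (fun a b : Trm F => Rewrite Rd b a)
  /-- R_d ∪ R_s is orthogonal -/
  orth : Orthogonal (Rd ∪ Rs)
  Rs_sorted : ∀ l r, (l, r) ∈ Rs → WS ar vs l true ∧ WS ar vs r true
  /-- left-hand sides of R_s have the shape f(u₁,…,uₙ,t₁,…,tₘ) with f ∈ Σ_s and
  each stream argument tᵢ a variable or of the form x : σ -/
  lhs_shape : ∀ l r, (l, r) ∈ Rs → ∃ f args, f ∈ Ss ∧ l = app f args ∧
    ∀ (i : ℕ) a, args[i]? = some a → (ar f).1[i]? = some true →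
      (∃ n, a = var n) ∨ (∃ n m, a = app cons [var n, var m])
  /-- exhaustiveness: every ground term f(u₁,…,uₙ,u_{n+1}:t₁,…) with the uᵢ data
  normal forms is a redex of R_s -/
  exhaustive : ∀ f ts, f ∈ Ss → Ground (app f ts) →
    SymOver (Sd ∪ Ss ∪ {cons}) (app f ts) → WS ar vs (app f ts) true →
    (∀ (i : ℕ) t, ts[i]? = some t →
      ((ar f).1[i]? = some false → ∀ t', ¬ Rewrite Rd t t') ∧
      ((ar f).1[i]? = some true → ∃ u t', t = app cons [u, t'])) →
    IsRedex Rs (app f ts)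

/-- A ground term of sort s over the signature of the specification. -/
def StreamSpec.GroundStream (S : StreamSpec F) (t : Trm F) : Prop :=
  Ground t ∧ SymOver (S.Sd ∪ S.Ss ∪ {S.cons}) t ∧ WS S.ar S.vs t true

/-- Productivity of the specification on all ground terms of sort s. -/
def StreamSpec.ProductiveAll (S : StreamSpec F) : Prop :=
  ∀ t, S.GroundStream t → Productive (S.Rd ∪ S.Rs) S.cons t

/-- The additional rule `x : σ → overflow`. -/
def ovRule (c ov : F) : Rule F := (app c [var 0, var 1], app ov [])


section AuxLemmas

variable {F : Type}

lemma ground_arg {f : F} {ts : List (Trm F)} (h : Ground (app f ts)) {u : Trm F}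
    (hu : u ∈ ts) : Ground u := by
  unfold Ground at h ⊢
  rw [varList] at h
  rw [List.flatMap_eq_nil_iff] at h
  exact h _ (List.mem_attach ts ⟨u, hu⟩)

lemma symOver_arg {S : Set F} {f : F} {ts : List (Trm F)} (h : SymOver S (app f ts))
    {u : Trm F} (hu : u ∈ ts) : SymOver S u := by
  cases h with
  | app _ _ _ hargs => exact hargs u hu

lemma symOver_root {S : Set F} {f : F} {ts : List (Trm F)} (h : SymOver S (app f ts)) :
    f ∈ S := by
  cases h with
  | app _ _ hf _ => exact hf

lemma ws_app_inv {ar : F → List Bool × Bool} {vs : ℕ → Bool} {f : F} {ts : List (Trm F)}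
    {b : Bool} (h : WS ar vs (app f ts) b) :
    b = (ar f).2 ∧ ts.length = (ar f).1.length ∧
      (∀ (i : ℕ) t c, ts[i]? = some t → (ar f).1[i]? = some c → WS ar vs t c) := by
  cases h with
  | app _ _ hlen hargs => exact ⟨rfl, hlen, hargs⟩

lemma arg_sort_get {ar : F → List Bool × Bool} {f : F} {ts : List (Trm F)} {i : ℕ}
    {u : Trm F} (hlen : ts.length = (ar f).1.length) (hget : ts[i]? = some u) :
    ∃ c, (ar f).1[i]? = some c := by
  have hi : i < ts.length := List.getElem?_eq_some_iff.mp hget |>.1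
  exact ⟨_, List.getElem?_eq_some_iff.mpr ⟨hlen ▸ hi, rfl⟩⟩

/-- Subterms of a well-sorted term of data sort are never cons-rooted. -/
lemma data_subterm_not_cons (S : StreamSpec F) :
    ∀ (q : List ℕ) (u : Trm F), WS S.ar S.vs u false →
      SymOver (S.Sd ∪ S.Ss ∪ {S.cons}) u →
      ∀ s, subtermAt u q = some s → ¬ ConsRooted S.cons s := by
  intro q
  induction q with
  | nil =>
    intro u hws hsym s hs hc
    rw [subtermAt] at hs
    cases hs
    obtain ⟨a, b, rfl⟩ := hc
    obtain ⟨hb, -, -⟩ := ws_app_inv hws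
    rw [S.cons_ar] at hb
    simp at hb
  | cons i q ih =>
    intro u hws hsym s hs hc
    cases u with
    | var n => rw [subtermAt] at hs; cases hs
    | app g ts =>
      rw [subtermAt] at hs
      obtain ⟨t, hget, hsub⟩ := Option.bind_eq_some_iff.mp hs
      obtain ⟨hb, hlen, hargs⟩ := ws_app_inv hws
      -- g ∈ Sd
      have hg : g ∈ S.Sd := by
        rcases symOver_root hsym with (hg | hg) | hg
        · exact hg
        · exact absurd (S.s_res g hg) (by rw [← hb]; simp)
        · simp at hg; subst hg
          rw [S.cons_ar] at hb; simp at hb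
      obtain ⟨c, hc'⟩ := arg_sort_get hlen hget
      have hcF : c = false := (S.d_sorts g hg).1 c (List.mem_of_getElem? hc')
      subst hcF
      have hwt : WS S.ar S.vs t false := hargs i t false hget hc'
      have hst : SymOver (S.Sd ∪ S.Ss ∪ {S.cons}) t := symOver_arg hsym (List.mem_of_getElem? hget)
      exact ih t hwt hst s hsub hc

lemma strictPref_cons {i : ℕ} {q p' : List ℕ} (h : StrictPref p' (i :: q)) :
    p' = [] ∨ ∃ q', p' = i :: q' ∧ q' <+: q := by
  obtain ⟨hpre, _⟩ := h
  cases p' with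
  | nil => exact Or.inl rfl
  | cons a as =>
    obtain ⟨l, hl⟩ := hpre
    cases hl
    exact Or.inr ⟨as, rfl, ⟨l, rfl⟩⟩

lemma main_aux (S : StreamSpec F) :
    ∀ (n : ℕ) (t : Trm F), sizeOf t ≤ n → S.GroundStream t → ¬ ConsRooted S.cons t →
    ∃ p, HasRedexAt (S.Rd ∪ S.Rs) t p ∧
      ∀ p', StrictPref p' p → ∀ s, subtermAt t p' = some s → ¬ ConsRooted S.cons s := by
  intro n
  induction n with
  | zero =>
    intro t ht
    cases t with
    | var m => simp at ht
    | app f ts => simp at ht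
  | succ n ih =>
    intro t ht hg hroot
    obtain ⟨hground, hsym, hws⟩ := hg
    cases t with
    | var m => simp [Ground, varList] at hground
    | app f ts =>
      obtain ⟨hb, hlen, hargs⟩ := ws_app_inv hws
      -- f ∈ Ss
      have hf : f ∈ S.Ss := by
        rcases symOver_root hsym with (hf | hf) | hf
        · exact absurd (S.d_sorts f hf).2 (by rw [← hb]; simp)
        · exact hf
        · simp at hf; subst hf
          rw [S.cons_ar] at hlen
          obtain ⟨a, b, rfl⟩ := List.length_eq_two.mp hlen
          exact absurd ⟨a, b, rfl⟩ hroot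
      by_cases H : ∀ (i : ℕ) u, ts[i]? = some u →
          ((S.ar f).1[i]? = some false → ∀ t', ¬ Rewrite S.Rd u t') ∧
          ((S.ar f).1[i]? = some true → ∃ v t', u = app S.cons [v, t']) 
      · -- root is a redex
        refine ⟨[], ⟨app f ts, rfl, ?_⟩, ?_⟩
        · obtain ⟨l, r, σ, hlr, hsub⟩ := S.exhaustive f ts hf hground hsym hws H
          exact ⟨l, r, σ, Or.inr hlr, hsub⟩
        · intro p' hp'
          exact (hp'.2 (List.prefix_nil.mp hp'.1)).elim
      · simp only [not_forall] at H
        obtain ⟨i, u, hget, hbad⟩ := H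
        have humem : u ∈ ts := List.mem_of_getElem? hget
        have hsize : sizeOf u ≤ n := by
          have := List.sizeOf_lt_of_mem humem
          simp at ht; omega
        have hgu : Ground u := ground_arg hground humem
        have hsu : SymOver (S.Sd ∪ S.Ss ∪ {S.cons}) u := symOver_arg hsym humem
        have hsubeq : ∀ q, subtermAt (app f ts) (i :: q) = subtermAt u q := by
          intro q; rw [subtermAt, hget]; rfl
        rcases not_and_or.mp hbad with hA | hB
        · -- data argument with a redex
          push_neg at hA
          obtain ⟨hsort, t', q, l, r, σ, hlr, hsub, -⟩ := hA
          have hwu : WS S.ar S.vs u false := hargs i u false hget hsort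
          refine ⟨i :: q, ⟨subst σ l, by rw [hsubeq]; exact hsub, l, r, σ, Or.inl hlr, rfl⟩, ?_⟩
          intro p' hp' s hs
          rcases strictPref_cons hp' with rfl | ⟨q', rfl, hq'⟩
          · rw [subtermAt] at hs; cases hs; exact hroot
          · rw [hsubeq] at hs
            exact data_subterm_not_cons S q' u hwu hsu s hs
        · -- stream argument not cons-rooted
          push_neg at hB
          obtain ⟨hsort, hnc⟩ := hB
          have hwu : WS S.ar S.vs u true := hargs i u true hget hsort
          have hnc' : ¬ ConsRooted S.cons u := by
            rintro ⟨v, t', rfl⟩; exact (hnc v t') rfl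
          obtain ⟨p, hred, habove⟩ := ih u hsize ⟨hgu, hsu, hwu⟩ hnc'
          obtain ⟨s, hs, hrs⟩ := hred
          refine ⟨i :: p, ⟨s, by rw [hsubeq]; exact hs, hrs⟩, ?_⟩
          intro p' hp' s' hs'
          rcases strictPref_cons hp' with rfl | ⟨q', rfl, hq'⟩
          · rw [subtermAt] at hs'; cases hs'; exact hroot
          · rw [hsubeq] at hs'
            have hne : q' ≠ p := by
              rintro rfl; exact hp'.2 rfl
            exact habove q' ⟨hq', hne⟩ s' hs'

end AuxLemmas

/-- every ground term of sort s not rooted by ':' contains a redex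
at a position p such that no position strictly above p is rooted by ':'. -/
theorem redex_not_below_cons {F : Type} (S : StreamSpec F) (t : Trm F)
    (hg : S.GroundStream t) (hroot : ¬ ConsRooted S.cons t) :
    ∃ p, HasRedexAt (S.Rd ∪ S.Rs) t p ∧
      ∀ p', StrictPref p' p → ∀ s, subtermAt t p' = some s → ¬ ConsRooted S.cons s :=
  main_aux S (sizeOf t) t le_rfl hg hroot
end

section
/- Let R be an orthogonal TRS. If t_1 rewrites to t_2 at position q by a non-outermost step, and t_2 rewrites to t_3 at position p by an outermost step, then either p is independent of q (neither is a prefix of the other) or p is a proper prefix of q. -/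
open Trm

variable {F : Type}

namespace MyAux
open Trm

variable {F : Type}

theorem subst_app (σ : ℕ → Trm F) (f : F) (ts : List (Trm F)) :
    subst σ (app f ts) = app f (ts.map (subst σ)) := by
  rw [subst]; rw [List.attach_map_val]

theorem varList_app (f : F) (ts : List (Trm F)) :
    varList (app f ts) = ts.flatMap varList := by
  rw [varList]; simp

@[simp] theorem subst_var (σ : ℕ → Trm F) (n : ℕ) : subst σ (var n) = σ n := by rw [subst]

@[simp] theorem subtermAt_nil (t : Trm F) : subtermAt t [] = some t := by
  cases t <;> rfl

@[simp] theorem replaceAt_nil (t s : Trm F) : replaceAt t [] s = some s := by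
  cases t <;> rfl

theorem subtermAt_cons (f : F) (ts : List (Trm F)) (i : ℕ) (p : List ℕ) :
    subtermAt (app f ts) (i :: p) = (ts[i]?).bind fun t => subtermAt t p := rfl

theorem replaceAt_cons (f : F) (ts : List (Trm F)) (i : ℕ) (p : List ℕ) (s : Trm F) :
    replaceAt (app f ts) (i :: p) s
      = (ts[i]?).bind fun t => (replaceAt t p s).map fun t' => app f (ts.set i t') := rfl

-- Lemma A
theorem subtermAt_append (t : Trm F) (p q : List ℕ) :
    subtermAt t (p ++ q) = (subtermAt t p).bind (fun u => subtermAt u q) := by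
  induction p generalizing t with
  | nil => simp
  | cons i p ih =>
    cases t with
    | var n => rfl
    | app f ts =>
      rw [List.cons_append, subtermAt_cons, subtermAt_cons]
      cases h : ts[i]? with
      | none => rfl
      | some u => simp [ih]

-- Lemma C
theorem subtermAt_replaceAt (t t' s : Trm F) (p : List ℕ)
    (h : replaceAt t p s = some t') : subtermAt t' p = some s := by
  induction p generalizing t t' with
  | nil => simp at h; subst h; simp
  | cons i p ih =>
    cases t with
    | var n => exact absurd h (by simp [replaceAt])
    | app f ts =>
      rw [replaceAt_cons] at h
      simp only [Option.bind_eq_some_iff, Option.map_eq_some_iff] at h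
      obtain ⟨u, hu, u', hu', ht'⟩ := h
      subst ht'
      rw [subtermAt_cons]
      have hlen : i < ts.length := (List.getElem?_eq_some_iff.mp hu).1
      have : (ts.set i u')[i]? = some u' := by
        simp [List.getElem?_set_self', hlen]
      rw [this, Option.bind_some]
      exact ih u u' hu'

-- Lemma B
theorem replaceAt_append (t t' u s : Trm F) (p q : List ℕ)
    (h : replaceAt t (p ++ q) s = some t') (hu : subtermAt t p = some u) :
    ∃ u', replaceAt u q s = some u' ∧ replaceAt t p u' = some t' := by
  induction p generalizing t t' with
  | nil =>
    simp at hu; subst hu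
    exact ⟨t', h, by simp⟩
  | cons i p ih =>
    cases t with
    | var n => exact absurd hu (by simp [subtermAt])
    | app f ts =>
      rw [subtermAt_cons] at hu
      simp only [Option.bind_eq_some_iff] at hu
      obtain ⟨v, hv, hvu⟩ := hu
      rw [List.cons_append, replaceAt_cons] at h
      simp only [Option.bind_eq_some_iff, Option.map_eq_some_iff] at h
      obtain ⟨v', hv', w, hw, ht'⟩ := h
      rw [hv] at hv'; cases hv'
      obtain ⟨u', h1, h2⟩ := ih v w hw hvu
      refine ⟨u', h1, ?_⟩
      rw [replaceAt_cons, hv, Option.bind_some, h2, Option.map_some, ht']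

-- Lemma I
theorem subtermAt_subst (σ : ℕ → Trm F) (t u : Trm F) (p : List ℕ)
    (h : subtermAt t p = some u) : subtermAt (subst σ t) p = some (subst σ u) := by
  induction p generalizing t with
  | nil => simp at h ⊢; rw [h]
  | cons i p ih =>
    cases t with
    | var n => exact absurd h (by simp [subtermAt])
    | app f ts =>
      rw [subtermAt_cons] at h
      simp only [Option.bind_eq_some_iff] at h
      obtain ⟨v, hv, hvu⟩ := h
      rw [subst_app, subtermAt_cons]
      have : (ts.map (subst σ))[i]? = some (subst σ v) := by
        simp [hv]
      rw [this, Option.bind_some]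
      exact ih v hvu

theorem mem_varList_of_subtermAt {t : Trm F} {p : List ℕ} {n : ℕ}
    (h : subtermAt t p = some (var n)) : n ∈ varList t := by
  induction p generalizing t with
  | nil => simp at h; subst h; simp [varList]
  | cons i p ih =>
    cases t with
    | var m => exact absurd h (by simp [subtermAt])
    | app f ts =>
      rw [subtermAt_cons] at h
      simp only [Option.bind_eq_some_iff] at h
      obtain ⟨v, hv, hvu⟩ := h
      rw [varList_app]
      exact List.mem_flatMap.mpr ⟨v, List.mem_of_getElem? hv, ih hvu⟩

-- subst congruence (Lemma E)
theorem subst_congr {σ τ : ℕ → Trm F} (t : Trm F)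
    (h : ∀ m ∈ varList t, σ m = τ m) : subst σ t = subst τ t := by
  cases t with
  | var n =>
    rw [subst_var, subst_var]
    exact h n (by simp [varList])
  | app f ts =>
    rw [subst_app, subst_app]
    congr 1
    apply List.map_congr_left
    intro u hu
    have hmem : u ∈ ts := hu
    exact subst_congr u (fun m hm => h m (by rw [varList_app]; exact List.mem_flatMap.mpr ⟨u, hu, hm⟩))
termination_by sizeOf t
decreasing_by subst_vars; have := List.sizeOf_lt_of_mem hmem; simp; omega

-- dichotomy
theorem subtermAt_subst_cases (σ : ℕ → Trm F) (t s : Trm F) (p : List ℕ)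
    (h : subtermAt (subst σ t) p = some s) :
    (∃ u, subtermAt t p = some u ∧ ¬ IsVar u ∧ s = subst σ u) ∨
    (∃ p₁ p₂ n, p = p₁ ++ p₂ ∧ subtermAt t p₁ = some (var n) ∧ subtermAt (σ n) p₂ = some s) := by
  cases t with
  | var n =>
    right
    rw [subst_var] at h
    exact ⟨[], p, n, rfl, by simp, h⟩
  | app f ts =>
    cases p with
    | nil =>
      left
      refine ⟨app f ts, by simp, by simp [IsVar], ?_⟩
      rw [subtermAt_nil, Option.some_inj] at h
      rw [← h]
    | cons i p =>
      rw [subst_app, subtermAt_cons] at h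
      simp only [Option.bind_eq_some_iff] at h
      obtain ⟨v, hv, hvs⟩ := h
      rw [List.getElem?_map] at hv
      simp only [Option.map_eq_some_iff] at hv
      obtain ⟨u, hu, rfl⟩ := hv
      have hmem : u ∈ ts := List.mem_of_getElem? hu
      rcases subtermAt_subst_cases σ u s p hvs with ⟨w, h1, h2, h3⟩ | ⟨p₁, p₂, n, rfl, h1, h2⟩
      · left
        refine ⟨w, ?_, h2, h3⟩
        rw [subtermAt_cons, hu, Option.bind_some]; exact h1
      · right
        refine ⟨i :: p₁, p₂, n, rfl, ?_, h2⟩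
        rw [subtermAt_cons, hu, Option.bind_some]; exact h1
termination_by sizeOf t
decreasing_by subst_vars; have := List.sizeOf_lt_of_mem hmem; simp; omega

theorem nodup_of_get?_flatMap {α β : Type*} {g : α → List β} {ts : List α}
    (h : (ts.flatMap g).Nodup) {i : ℕ} {u : α} (hi : ts[i]? = some u) :
    (g u).Nodup := by
  induction ts generalizing i with
  | nil => simp at hi
  | cons a rest ih =>
    rw [List.flatMap_cons, List.nodup_append] at h
    cases i with
    | zero => simp at hi; subst hi; exact h.1
    | succ k => exact ih h.2.1 (by simpa using hi)

theorem nodup_flatMap_disjoint {α β : Type*} {g : α → List β} {ts : List α}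
    (h : (ts.flatMap g).Nodup) {i j : ℕ} {u v : α}
    (hi : ts[i]? = some u) (hj : ts[j]? = some v) (hij : i ≠ j)
    {n : β} (hn : n ∈ g u) : n ∉ g v := by
  induction ts generalizing i j with
  | nil => simp at hi
  | cons a rest ih =>
    rw [List.flatMap_cons, List.nodup_append] at h
    cases i with
    | zero =>
      simp at hi; subst hi
      cases j with
      | zero => exact absurd rfl hij
      | succ k =>
        intro hnv
        have hvmem : v ∈ rest := List.mem_of_getElem? (by simpa using hj)
        exact h.2.2 _ hn _ (List.mem_flatMap.mpr ⟨v, hvmem, hnv⟩) rfl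
    | succ k =>
      cases j with
      | zero =>
        simp at hj; subst hj
        intro hnv
        have humem : u ∈ rest := List.mem_of_getElem? (by simpa using hi)
        exact h.2.2 _ hnv _ (List.mem_flatMap.mpr ⟨u, humem, hn⟩) rfl
      | succ m =>
        exact ih h.2.1 (by simpa using hi) (by simpa using hj) (by omega)

-- Lemma D
theorem replaceAt_subst_var (σ : ℕ → Trm F) (t : Trm F) (p₁ p₂ : List ℕ) (n : ℕ)
    (w w' : Trm F) (hnd : (varList t).Nodup) (h1 : subtermAt t p₁ = some (var n))
    (h2 : replaceAt (σ n) p₂ w = some w') :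
    replaceAt (subst σ t) (p₁ ++ p₂) w
      = some (subst (fun m => if m = n then w' else σ m) t) := by
  induction p₁ generalizing t with
  | nil =>
    simp at h1; subst h1
    rw [List.nil_append, subst_var, subst_var, if_pos rfl]
    exact h2
  | cons i p₁ ih =>
    cases t with
    | var m => exact absurd h1 (by simp [subtermAt])
    | app f ts =>
      rw [subtermAt_cons] at h1
      simp only [Option.bind_eq_some_iff] at h1
      obtain ⟨u, hu, hu1⟩ := h1
      rw [varList_app] at hnd
      have hnd' : (varList u).Nodup := nodup_of_get?_flatMap hnd hu
      have hrec := ih u hnd' hu1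
      rw [subst_app, List.cons_append, replaceAt_cons]
      have hmap : (ts.map (subst σ))[i]? = some (subst σ u) := by
        simp [hu]
      rw [hmap, Option.bind_some, hrec, Option.map_some, subst_app]
      congr 2
      have hn_mem : n ∈ varList u := mem_varList_of_subtermAt hu1
      have hlen : i < ts.length := (List.getElem?_eq_some_iff.mp hu).1
      apply List.ext_getElem?
      intro j
      rcases eq_or_ne j i with rfl | hji
      · rw [List.getElem?_set_self' ]
        simp only [List.getElem?_map]
        rw [hu]
        rfl
      · rw [List.getElem?_set_ne (by omega)]
        simp only [List.getElem?_map]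
        cases hv : ts[j]? with
        | none => rfl
        | some v =>
          rw [Option.map_some, Option.map_some, Option.some_inj]
          have hv' : ts[j]? = some v := by exact hv
          have hdisj := nodup_flatMap_disjoint hnd hu hv' (by omega) hn_mem
          exact (subst_congr v (fun m hm => by
            rcases eq_or_ne m n with rfl | hmn
            · exact absurd hm hdisj
            · simp [hmn])).symm

end MyAux


/-- a non-outermost step at q followed by an outermost step at p
implies p ∥ q or p strictly above q. -/
theorem nonout_then_out_indep_or_above {F : Type} (R : Set (Rule F))
    (ho : Orthogonal R) (t₁ t₂ t₃ : Trm F) (q p : List ℕ)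
    (h₁ : NonOutStepAt R t₁ t₂ q) (h₂ : OutStepAt R t₂ t₃ p) :
    Indep p q ∨ StrictPref p q := by
  open MyAux in
  by_cases hqp : q <+: p
  · -- contradiction branch
    exfalso
    obtain ⟨hrw₁, q', hsp', hred⟩ := h₁
    obtain ⟨hrw₂, hout⟩ := h₂
    obtain ⟨hq'q, hne⟩ := hsp'
    -- q' is a strict prefix of p
    have hq'p : q' <+: p := hq'q.trans hqp
    have hlt : q'.length < q.length :=
      lt_of_le_of_ne hq'q.length_le (fun hl => hne (List.IsPrefix.eq_of_length hq'q hl))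
    have hq'nep : q' ≠ p := by
      intro h; subst h
      exact absurd (List.IsPrefix.eq_of_length hqp
        (le_antisymm hqp.length_le (le_of_lt hlt))).symm hne
    refine hout q' ⟨hq'p, hq'nep⟩ ?_
    -- decompose q = q' ++ q₂
    obtain ⟨q₂, rfl⟩ := hq'q
    have hq₂ : q₂ ≠ [] := by rintro rfl; simp at hne
    obtain ⟨s, hs, l, r, σ, hlr, hsl⟩ := hred
    subst hsl
    obtain ⟨l₂, r₂, τ, hlr₂, hsub, hrep⟩ := hrw₁
    rw [subtermAt_append, hs, Option.bind_some] at hsub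
    obtain ⟨s', hres, hrep'⟩ := replaceAt_append t₁ t₂ (subst σ l) (subst τ r₂) q' q₂ hrep hs
    refine ⟨s', subtermAt_replaceAt _ _ _ _ hrep', ?_⟩
    -- s' is a redex
    cases l with
    | var n =>
      exact ⟨var n, r, fun _ => s', hlr, by rw [subst_var]⟩
    | app g us =>
      rcases subtermAt_subst_cases σ (app g us) (subst τ l₂) q₂ hsub with
        ⟨u, hu1, hu2, hu3⟩ | ⟨p₁, p₂, n, heq, hv1, hv2⟩
      · exact absurd (ho.2 (app g us) r l₂ r₂ hlr hlr₂ q₂ u hu1 hu2 σ τ hu3.symm).1 hq₂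
      · subst heq
        have hσn : subtermAt (subst σ (app g us)) p₁ = some (σ n) := by
          have := subtermAt_subst σ (app g us) (var n) p₁ hv1
          rwa [subst_var] at this
        obtain ⟨w', hw1, hw2⟩ :=
          replaceAt_append (subst σ (app g us)) s' (σ n) (subst τ r₂) p₁ p₂ hres hσn
        have hD := replaceAt_subst_var σ (app g us) p₁ p₂ n (subst τ r₂) w'
          (ho.1 (app g us) r hlr) hv1 hw1
        rw [hres] at hD
        exact ⟨app g us, r, _, hlr, (Option.some_inj.mp hD)⟩
  · by_cases hpq : p <+: q
    · exact Or.inr ⟨hpq, fun h => hqp (h ▸ List.prefix_rfl)⟩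
    · exact Or.inl ⟨hpq, hqp⟩
end

section
/- Let R be an orthogonal TRS. If t →* t', then there exists a term t̂ such that t rewrites to t̂ by a sequence of outermost steps and t̂ rewrites to t' by a sequence of non-outermost steps. In other words, any finite reduction can be rearranged into an outermost phase followed by a non-outermost phase. -/
open Trm

variable {F : Type}

namespace SplitAux
open Trm

variable {F : Type}

/-! ### Term basics -/

theorem trm_ind {P : Trm F → Prop} (hv : ∀ n, P (var n))
    (ha : ∀ f ts, (∀ t ∈ ts, P t) → P (app f ts)) : ∀ t, P t
  | var n => hv n
  | app f ts => ha f ts (fun t ht => trm_ind hv ha t)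
decreasing_by have := List.sizeOf_lt_of_mem ht; simp; omega

@[simp] theorem subst_var (σ : ℕ → Trm F) (n : ℕ) : subst σ (var n) = σ n := by
  simp [subst]

@[simp] theorem subst_app (σ : ℕ → Trm F) (f : F) (ts : List (Trm F)) :
    subst σ (app f ts) = app f (ts.map (subst σ)) := by
  rw [subst]; congr 1; exact List.attach_map_val

@[simp] theorem varList_var (n : ℕ) : varList (F := F) (var n) = [n] := by
  simp [varList]

@[simp] theorem varList_app (f : F) (ts : List (Trm F)) :
    varList (app f ts) = ts.flatMap varList := by
  rw [varList]; simp [List.flatMap]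

@[simp] theorem subtermAt_nil (t : Trm F) : subtermAt t [] = some t := by
  cases t <;> rfl

@[simp] theorem subtermAt_var_cons (n i : ℕ) (p : List ℕ) :
    subtermAt (F := F) (var n) (i :: p) = none := rfl

@[simp] theorem subtermAt_app_cons (f : F) (ts : List (Trm F)) (i : ℕ) (p : List ℕ) :
    subtermAt (app f ts) (i :: p) = (ts[i]?).bind fun t => subtermAt t p := rfl

@[simp] theorem replaceAt_nil (t s : Trm F) : replaceAt t [] s = some s := by
  cases t <;> rfl

@[simp] theorem replaceAt_var_cons (n i : ℕ) (p : List ℕ) (s : Trm F) :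
    replaceAt (F := F) (var n) (i :: p) s = none := rfl

@[simp] theorem replaceAt_app_cons (f : F) (ts : List (Trm F)) (i : ℕ) (p : List ℕ) (s : Trm F) :
    replaceAt (app f ts) (i :: p) s =
      (ts[i]?).bind fun t => (replaceAt t p s).map fun t' => app f (ts.set i t') := rfl

theorem set_of_get? {α : Type*} : ∀ (l : List α) (i : ℕ) (a : α), l[i]? = some a → l.set i a = l
  | [], i, a, h => by simp at h
  | x :: l, 0, a, h => by simp_all
  | x :: l, i+1, a, h => by
      simp only [List.getElem?_cons_succ] at h
      simp [set_of_get? l i a h]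

/-! ### Position combinatorics -/

theorem prefix_trichotomy (p q : List ℕ) : p <+: q ∨ q <+: p ∨ Indep p q := by
  by_cases h1 : p <+: q
  · exact Or.inl h1
  by_cases h2 : q <+: p
  · exact Or.inr (Or.inl h2)
  · exact Or.inr (Or.inr ⟨h1, h2⟩)

theorem indep_symm {p q : List ℕ} (h : Indep p q) : Indep q p := ⟨h.2, h.1⟩

theorem not_indep_self (p : List ℕ) : ¬ Indep p p := fun h => h.1 (List.prefix_refl p)

theorem indep_append_cancel {v w w' : List ℕ} (h : Indep (v ++ w) (v ++ w')) : Indep w w' := by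
  refine ⟨fun hw => h.1 ?_, fun hw => h.2 ?_⟩
  · exact (List.prefix_append_right_inj v).mpr hw
  · exact (List.prefix_append_right_inj v).mpr hw

theorem indep_append_lift {w w' : List ℕ} (v : List ℕ) (h : Indep w w') :
    Indep (v ++ w) (v ++ w') := by
  refine ⟨fun hw => h.1 ?_, fun hw => h.2 ?_⟩
  · exact (List.prefix_append_right_inj v).mp hw
  · exact (List.prefix_append_right_inj v).mp hw

theorem indep_append_left {p a : List ℕ} (w : List ℕ) (h : Indep p a) : Indep (p ++ w) a := by
  constructor
  · intro hpa
    exact h.1 ((p.prefix_append w).trans hpa)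
  · intro hap
    rcases List.prefix_or_prefix_of_prefix hap (p.prefix_append w) with h1 | h1
    · exact h.2 h1
    · exact h.1 h1

theorem strictPref_append_cancel {v e d : List ℕ} (h : StrictPref (v ++ e) (v ++ d)) :
    StrictPref e d := by
  refine ⟨(List.prefix_append_right_inj v).mp h.1, fun hh => h.2 (by rw [hh])⟩

theorem strictPref_of_ne_prefix {p q : List ℕ} (h : p <+: q) (hne : p ≠ q) : StrictPref p q :=
  ⟨h, hne⟩

theorem not_prefix_cases {p q : List ℕ} (h : ¬ p <+: q) : StrictPref q p ∨ Indep p q := by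
  rcases prefix_trichotomy p q with h1 | h1 | h1
  · exact absurd h1 h
  · exact Or.inl ⟨h1, fun hh => h (hh ▸ List.prefix_refl q)⟩
  · exact Or.inr h1

/-! ### subterm / replace algebra -/


theorem setg_self {α : Type*} {ts : List α} {i : ℕ} {a : α} (h : ts[i]? = some a) (b : α) :
    (ts.set i b)[i]? = some b :=
  List.getElem?_set_self (List.getElem?_eq_some_iff.mp h).1

theorem setg_ne {α : Type*} (ts : List α) {i j : ℕ} (h : i ≠ j) (b : α) :
    (ts.set i b)[j]? = ts[j]? := List.getElem?_set_ne h

theorem subtermAt_append : ∀ (p : List ℕ) (t : Trm F) (q : List ℕ),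
    subtermAt t (p ++ q) = (subtermAt t p).bind fun s => subtermAt s q
  | [], t, q => by simp
  | i :: p, var n, q => by simp
  | i :: p, app f ts, q => by
      cases hi : ts[i]? with
      | none => simp [hi]
      | some a => simp [hi, subtermAt_append p a q]

theorem replaceAt_isSome {t s : Trm F} : ∀ {p : List ℕ} {u : Trm F},
    subtermAt t p = some u → ∃ t', replaceAt t p s = some t' := by
  intro p
  induction p generalizing t with
  | nil => intro u _; exact ⟨s, by simp⟩
  | cons i p ih =>
      intro u h
      cases t with
      | var n => simp at h
      | app f ts =>
          simp only [subtermAt_app_cons, Option.bind_eq_some_iff] at h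
          obtain ⟨a, ha, hsub⟩ := h
          obtain ⟨a', ha'⟩ := ih (t := a) hsub
          exact ⟨app f (ts.set i a'), by simp [ha, ha']⟩

theorem subtermAt_isSome_of_replace {t s t' : Trm F} : ∀ {p : List ℕ},
    replaceAt t p s = some t' → ∃ u, subtermAt t p = some u := by
  intro p
  induction p generalizing t t' with
  | nil => intro _; exact ⟨t, by simp⟩
  | cons i p ih =>
      intro h
      cases t with
      | var n => simp at h
      | app f ts =>
          simp only [replaceAt_app_cons, Option.bind_eq_some_iff,
            Option.map_eq_some_iff] at h
          obtain ⟨a, ha, b, hb, _⟩ := h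
          obtain ⟨u, hu⟩ := ih hb
          exact ⟨u, by simp [ha, hu]⟩

theorem subtermAt_replaceAt_self {t s t' : Trm F} : ∀ {p : List ℕ},
    replaceAt t p s = some t' → subtermAt t' p = some s := by
  intro p
  induction p generalizing t t' with
  | nil => intro h; simp at h; simp [← h]
  | cons i p ih =>
      intro h
      cases t with
      | var n => simp at h
      | app f ts =>
          simp only [replaceAt_app_cons, Option.bind_eq_some_iff,
            Option.map_eq_some_iff] at h
          obtain ⟨a, ha, b, hb, ht'⟩ := h
          subst ht'
          simp [setg_self ha, ih hb]

theorem subtermAt_replaceAt_indep {t s t' : Trm F} : ∀ {p q : List ℕ}, Indep p q →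
    replaceAt t p s = some t' → subtermAt t' q = subtermAt t q := by
  intro p
  induction p generalizing t t' with
  | nil => intro q h; exact absurd (List.nil_prefix) h.1
  | cons i p ih =>
      intro q hpq h
      cases t with
      | var n => simp at h
      | app f ts =>
          simp only [replaceAt_app_cons, Option.bind_eq_some_iff,
            Option.map_eq_some_iff] at h
          obtain ⟨a, ha, b, hb, ht'⟩ := h
          subst ht'
          cases q with
          | nil => exact absurd (List.nil_prefix) hpq.2
          | cons j q =>
              by_cases hij : i = j
              · subst hij
                have hpq' : Indep p q := indep_append_cancel (v := [i]) hpq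
                simp [setg_self ha, ha, ih hpq' hb]
              · simp [setg_ne ts hij]

theorem replaceAt_replaceAt {t a t₁ : Trm F} : ∀ {p : List ℕ} (b : Trm F),
    replaceAt t p a = some t₁ → replaceAt t₁ p b = replaceAt t p b := by
  intro p
  induction p generalizing t t₁ with
  | nil => intro b h; simp
  | cons i p ih =>
      intro b h
      cases t with
      | var n => simp at h
      | app f ts =>
          simp only [replaceAt_app_cons, Option.bind_eq_some_iff,
            Option.map_eq_some_iff] at h
          obtain ⟨x, hx, y, hy, ht₁⟩ := h
          subst ht₁
          simp only [replaceAt_app_cons, setg_self hx, hx,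
            Option.bind_some]
          rw [ih b hy]
          cases hz : replaceAt x p b with
          | none => simp
          | some z => simp [List.set_set]

theorem replaceAt_self {t u : Trm F} : ∀ {p : List ℕ},
    subtermAt t p = some u → replaceAt t p u = some t := by
  intro p
  induction p generalizing t with
  | nil => intro h; simp at h; simp [h]
  | cons i p ih =>
      intro h
      cases t with
      | var n => simp at h
      | app f ts =>
          simp only [subtermAt_app_cons, Option.bind_eq_some_iff] at h
          obtain ⟨a, ha, hs⟩ := h
          have hset : ts.set i a = ts := set_of_get? ts i a ha
          simp [ha, ih hs, hset]

theorem replaceAt_append_of {t s s' c t' : Trm F} : ∀ {p : List ℕ} {q : List ℕ},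
    subtermAt t p = some s → replaceAt s q c = some s' → replaceAt t p s' = some t' →
    replaceAt t (p ++ q) c = some t' := by
  intro p
  induction p generalizing t t' with
  | nil =>
      intro q h1 h2 h3; simp at h1 h3; subst h1; subst h3; simpa using h2
  | cons i p ih =>
      intro q h1 h2 h3
      cases t with
      | var n => simp at h1
      | app f ts =>
          simp only [subtermAt_app_cons, Option.bind_eq_some_iff] at h1
          obtain ⟨a, ha, hs⟩ := h1
          simp only [replaceAt_app_cons, Option.bind_eq_some_iff,
            Option.map_eq_some_iff] at h3
          obtain ⟨a', ha', b, hb, ht'⟩ := h3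
          rw [ha] at ha'; cases ha'
          simp only [List.cons_append, replaceAt_app_cons, ha,
            Option.bind_some]
          simp [ih hs h2 hb, ht']

theorem replaceAt_append_elim {t c t' : Trm F} : ∀ {p q : List ℕ},
    replaceAt t (p ++ q) c = some t' →
    ∃ s s', subtermAt t p = some s ∧ replaceAt s q c = some s' ∧ replaceAt t p s' = some t' := by
  intro p
  induction p generalizing t t' with
  | nil => intro q h; exact ⟨t, t', by simp, by simpa using h, by simp⟩
  | cons i p ih =>
      intro q h
      cases t with
      | var n => simp at h
      | app f ts =>
          simp only [List.cons_append, replaceAt_app_cons, 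
            Option.bind_eq_some_iff, Option.map_eq_some_iff] at h
          obtain ⟨a, ha, b, hb, ht'⟩ := h
          obtain ⟨s, s', hs, hrs, hra⟩ := ih hb
          refine ⟨s, s', by simp [ha, hs], hrs, ?_⟩
          simp [ha, hra, ht']

theorem replaceAt_comm {t a b t₁ t₂ : Trm F} : ∀ {p q : List ℕ}, Indep p q →
    replaceAt t p a = some t₁ → replaceAt t₁ q b = some t₂ →
    ∃ t₁', replaceAt t q b = some t₁' ∧ replaceAt t₁' p a = some t₂ := by
  intro p
  induction p generalizing t t₁ t₂ with
  | nil => intro q h; exact absurd (List.nil_prefix) h.1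
  | cons i p ih =>
      intro q hpq h1 h2
      cases t with
      | var n => simp at h1
      | app f ts =>
          simp only [replaceAt_app_cons, Option.bind_eq_some_iff,
            Option.map_eq_some_iff] at h1
          obtain ⟨x, hx, y, hy, ht₁⟩ := h1
          subst ht₁
          cases q with
          | nil => exact absurd (List.nil_prefix) hpq.2
          | cons j q =>
              by_cases hij : i = j
              · subst hij
                have hpq' : Indep p q := indep_append_cancel (v := [i]) hpq
                simp only [replaceAt_app_cons, setg_self hx,
                  Option.bind_some, Option.map_eq_some_iff] at h2
                obtain ⟨y', hy', ht₂⟩ := h2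
                obtain ⟨z, hz1, hz2⟩ := ih hpq' hy hy'
                refine ⟨app f (ts.set i z),
                  by simp [hx, hz1], ?_⟩
                simp only [replaceAt_app_cons, setg_self hx,
                  Option.bind_some, hz2, Option.map_some]
                rw [← ht₂, List.set_set, List.set_set]
              · simp only [replaceAt_app_cons, setg_ne ts hij,
                  Option.bind_eq_some_iff, Option.map_eq_some_iff] at h2
                obtain ⟨x', hx', y', hy', ht₂⟩ := h2
                refine ⟨app f (ts.set j y'),
                  by simp [hx', hy'], ?_⟩
                simp only [replaceAt_app_cons, 
                  setg_ne ts (Ne.symm hij), hx, Option.bind_some, hy, Option.map_some]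
                rw [← ht₂, List.set_comm _ _ hij]

theorem subtermAt_subst : ∀ {l : Trm F} {v : List ℕ} {s : Trm F} (σ : ℕ → Trm F),
    subtermAt l v = some s → subtermAt (subst σ l) v = some (subst σ s) := by
  intro l v
  induction v generalizing l with
  | nil => intro s σ h; simp at h; simp [h]
  | cons i v ih =>
      intro s σ h
      cases l with
      | var n => simp at h
      | app f ts =>
          simp only [subtermAt_app_cons, Option.bind_eq_some_iff] at h
          obtain ⟨a, ha, hs⟩ := h
          have : (ts.map (subst σ))[i]? = some (subst σ a) := by
            simp [List.getElem?_map, ha]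
          simp [this, ih σ hs]

/-! ### substitution lemmas -/

theorem subst_congr : ∀ {t : Trm F} {σ τ : ℕ → Trm F},
    (∀ n ∈ varList t, σ n = τ n) → subst σ t = subst τ t := by
  intro t
  induction t using trm_ind with
  | hv n => intro σ τ h; simpa using h n (by simp)
  | ha f ts ih =>
      intro σ τ h
      simp only [subst_app, app.injEq, true_and]
      refine List.map_congr_left fun a haa => ih a haa fun n hn => h n ?_
      simp only [varList_app, List.mem_flatMap]
      exact ⟨a, haa, hn⟩

theorem varList_subtermAt : ∀ {v : List ℕ} {t s : Trm F},
    subtermAt t v = some s → ∀ n ∈ varList s, n ∈ varList t := by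
  intro v
  induction v with
  | nil => intro t s h; simp at h; subst h; exact fun n hn => hn
  | cons i v ih =>
      intro t s h
      cases t with
      | var m => simp at h
      | app f ts =>
          simp only [subtermAt_app_cons, Option.bind_eq_some_iff] at h
          obtain ⟨a, ha, hs⟩ := h
          intro n hn
          simp only [varList_app, List.mem_flatMap]
          exact ⟨a, List.mem_of_getElem? ha, ih hs n hn⟩

theorem nodup_varList_mem {ts : List (Trm F)} (h : (ts.flatMap varList).Nodup) :
    ∀ a ∈ ts, (varList a).Nodup := by
  induction ts with
  | nil => simp
  | cons b ts ih =>
      rw [List.flatMap_cons, List.nodup_append] at h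
      intro a ha
      rcases List.mem_cons.mp ha with rfl | ha'
      · exact h.1
      · exact ih h.2.1 a ha'

theorem nodup_varList_disj {ts : List (Trm F)} (h : (ts.flatMap varList).Nodup) :
    ∀ {i j : ℕ} {a b : Trm F}, i ≠ j → ts[i]? = some a → ts[j]? = some b →
      ∀ x ∈ varList a, x ∉ varList b := by
  induction ts with
  | nil => intro i j a b _ hi; simp at hi
  | cons t ts ih =>
      rw [List.flatMap_cons, List.nodup_append] at h
      intro i j a b hij hi hj
      match i, j with
      | 0, 0 => exact absurd rfl hij
      | 0, j+1 =>
          simp only [List.getElem?_cons_zero, Option.some_inj] at hi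
          subst hi
          simp only [List.getElem?_cons_succ] at hj
          intro x hx hxb
          exact h.2.2 x hx x (by
            simp only [List.mem_flatMap]
            exact ⟨b, List.mem_of_getElem? hj, hxb⟩) rfl
      | i+1, 0 =>
          simp only [List.getElem?_cons_zero, Option.some_inj] at hj
          subst hj
          simp only [List.getElem?_cons_succ] at hi
          intro x hx hxb
          exact h.2.2 x hxb x (by
            simp only [List.mem_flatMap]
            exact ⟨a, List.mem_of_getElem? hi, hx⟩) rfl
      | i+1, j+1 =>
          simp only [List.getElem?_cons_succ] at hi hj
          exact ih h.2.1 (fun hh => hij (by omega)) hi hj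

theorem subtermAt_subst_split : ∀ {l : Trm F} {d : List ℕ} {u : Trm F} {σ : ℕ → Trm F},
    subtermAt (subst σ l) d = some u →
    (∃ s, subtermAt l d = some s ∧ ¬ IsVar s ∧ u = subst σ s) ∨
    (∃ v w n, d = v ++ w ∧ subtermAt l v = some (var n) ∧ subtermAt (σ n) w = some u) := by
  intro l
  induction l using trm_ind with
  | hv n =>
      intro d u σ h
      exact Or.inr ⟨[], d, n, rfl, by simp, by simpa using h⟩
  | ha f ts ih =>
      intro d u σ h
      cases d with
      | nil =>
          simp only [subtermAt_nil, Option.some_inj] at h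
          exact Or.inl ⟨app f ts, by simp, by simp [IsVar], h.symm⟩
      | cons i d =>
          simp only [subst_app, subtermAt_app_cons, 
            Option.bind_eq_some_iff, List.getElem?_map] at h
          obtain ⟨a', ha', hs⟩ := h
          rw [Option.map_eq_some_iff] at ha'
          obtain ⟨a, ha, rfl⟩ := ha'
          rcases ih a (List.mem_of_getElem? ha) hs with ⟨s, h1, h2, h3⟩ | ⟨v, w, n, h1, h2, h3⟩
          · exact Or.inl ⟨s, by simp [ha, h1], h2, h3⟩
          · exact Or.inr ⟨i :: v, w, n, by simp [h1],
              by simp [ha, h2], h3⟩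

theorem mem_varList_of_subterm_var {l : Trm F} {v : List ℕ} {n : ℕ}
    (h : subtermAt l v = some (var n)) : n ∈ varList l :=
  varList_subtermAt h n (by simp)

theorem var_pos_unique : ∀ {l : Trm F}, (varList l).Nodup →
    ∀ {v v' : List ℕ} {n : ℕ}, subtermAt l v = some (var n) →
      subtermAt l v' = some (var n) → v = v' := by
  intro l
  induction l using trm_ind with
  | hv m =>
      intro _ v v' n h1 h2
      cases v with
      | nil =>
          cases v' with
          | nil => rfl
          | cons j v' => simp at h2
      | cons i v => simp at h1
  | ha f ts ih =>
      intro hnd v v' n h1 h2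
      rw [varList_app] at hnd
      cases v with
      | nil => simp at h1
      | cons i v =>
          cases v' with
          | nil => simp at h2
          | cons j v' =>
              simp only [subtermAt_app_cons, Option.bind_eq_some_iff] at h1 h2
              obtain ⟨a, ha, hsa⟩ := h1
              obtain ⟨b, hb, hsb⟩ := h2
              by_cases hij : i = j
              · subst hij
                rw [ha] at hb; cases hb
                rw [ih a (List.mem_of_getElem? ha) (nodup_varList_mem hnd a
                  (List.mem_of_getElem? ha)) hsa hsb]
              · exact absurd (mem_varList_of_subterm_var hsb)
                  (nodup_varList_disj hnd hij ha hb n (mem_varList_of_subterm_var hsa))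

theorem replace_in_subst : ∀ {l : Trm F}, (varList l).Nodup →
    ∀ {v w : List ℕ} {n : ℕ} {c z : Trm F} {σ : ℕ → Trm F},
    subtermAt l v = some (var n) → replaceAt (subst σ l) (v ++ w) c = some z →
    ∃ a, replaceAt (σ n) w c = some a ∧ z = subst (Function.update σ n a) l := by
  intro l
  induction l using trm_ind with
  | hv m =>
      intro _ v w n c z σ hv h
      cases v with
      | cons i v => simp at hv
      | nil =>
          simp only [subtermAt_nil, Option.some_inj, var.injEq] at hv
          subst hv
          refine ⟨z, by simpa using h, by simp⟩
  | ha f ts ih =>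
      intro hnd v w n c z σ hv h
      cases v with
      | nil => simp at hv
      | cons i v =>
          rw [varList_app] at hnd
          simp only [subtermAt_app_cons, Option.bind_eq_some_iff] at hv
          obtain ⟨b, hb, hvb⟩ := hv
          simp only [List.cons_append, subst_app, replaceAt_app_cons, 
            List.getElem?_map, hb, Option.map_some, Option.bind_some,
            Option.map_eq_some_iff] at h
          obtain ⟨zb, hzb, hz⟩ := h
          obtain ⟨a, hra, hzba⟩ := ih b (List.mem_of_getElem? hb)
            (nodup_varList_mem hnd b (List.mem_of_getElem? hb)) hvb hzb
          refine ⟨a, hra, ?_⟩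
          subst hz hzba
          simp only [subst_app, app.injEq, true_and]
          apply List.ext_getElem?
          intro k
          by_cases hk : k = i
          · subst hk
            have hlen : k < ts.length := (List.getElem?_eq_some_iff.mp hb).1
            rw [List.getElem?_set_self (by simpa using hlen)]
            simp [List.getElem?_map, hb]
          · rw [List.getElem?_set_ne (fun hh => hk hh.symm)]
            simp only [List.getElem?_map]
            cases htk : ts[k]? with
            | none => simp
            | some tk =>
                simp only [Option.map_some, Option.some_inj]
                refine subst_congr fun m hm => ?_
                have hne : m ≠ n := by
                  intro hmn
                  subst hmn
                  exact nodup_varList_disj hnd (fun hh => hk hh.symm) hb htk m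
                    (mem_varList_of_subterm_var hvb) hm
                simp [Function.update_of_ne hne]

/-! ### rewrite step lemmas -/

variable {R : Set (Rule F)}

theorem hasRedexAt_of_rewriteAt {t t' : Trm F} {p : List ℕ} (h : RewriteAt R t t' p) :
    HasRedexAt R t p := by
  obtain ⟨l, r, σ, hlr, hsub, _⟩ := h
  exact ⟨subst σ l, hsub, l, r, σ, hlr, rfl⟩

theorem rewriteAt_subterm_indep {t t' : Trm F} {p q : List ℕ} (h : RewriteAt R t t' p)
    (hpq : Indep p q) : subtermAt t' q = subtermAt t q := by
  obtain ⟨l, r, σ, hlr, hsub, hrep⟩ := h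
  exact subtermAt_replaceAt_indep hpq hrep

theorem hasRedex_indep {t t' : Trm F} {p q : List ℕ} (h : RewriteAt R t t' p)
    (hpq : Indep p q) (hr : HasRedexAt R t q) : HasRedexAt R t' q := by
  obtain ⟨s, hs, hred⟩ := hr
  exact ⟨s, by rw [rewriteAt_subterm_indep h hpq]; exact hs, hred⟩

theorem redex_inside (ho : Orthogonal R) {l r : Trm F} {σ : ℕ → Trm F}
    (hlr : (l, r) ∈ R) {d : List ℕ} {u : Trm F}
    (hd : subtermAt (subst σ l) d = some u) (hu : IsRedex R u) (hne : d ≠ []) :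
    ∃ v w n, d = v ++ w ∧ subtermAt l v = some (var n) := by
  rcases subtermAt_subst_split hd with ⟨s, hs, hnv, rfl⟩ | ⟨v, w, n, h1, h2, _⟩
  · obtain ⟨l₂, r₂, τ, h₂, heq⟩ := hu
    exact absurd (ho.2 l r l₂ r₂ hlr h₂ d s hs hnv σ τ heq).1 hne
  · exact ⟨v, w, n, h1, h2⟩

theorem root_rules_eq (ho : Orthogonal R) {l r l₂ r₂ : Trm F} (h1 : (l, r) ∈ R)
    (h2 : (l₂, r₂) ∈ R) (hnv : ¬ IsVar l) {σ τ : ℕ → Trm F}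
    (heq : subst σ l = subst τ l₂) : l = l₂ ∧ r = r₂ :=
  (ho.2 l r l₂ r₂ h1 h2 [] l (by simp) hnv σ τ heq).2

theorem var_lhs_of_var_lhs (ho : Orthogonal R) {l r l₂ r₂ : Trm F} (h1 : (l, r) ∈ R)
    (h2 : (l₂, r₂) ∈ R) (hv : IsVar l) : ∃ n, l₂ = var n := by
  cases l₂ with
  | var n => exact ⟨n, rfl⟩
  | app f ts =>
      cases l with
      | app g ss => exact absurd hv (by simp [IsVar])
      | var m =>
          have := (ho.2 (app f ts) r₂ (var m) r h2 h1 [] (app f ts) (by simp)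
            (by simp [IsVar]) Trm.var (fun _ => subst Trm.var (app f ts)) (by simp)).2.1
          simp at this

theorem persist_step (ho : Orthogonal R) {t t' : Trm F} {q p : List ℕ}
    (hr : HasRedexAt R t q) (hstep : RewriteAt R t t' p) (hqp : StrictPref q p) :
    HasRedexAt R t' q := by
  obtain ⟨s, hs, l, r, σ, hlr, rfl⟩ := hr
  obtain ⟨d, hd⟩ := hqp.1
  subst hd
  have hdne : d ≠ [] := by rintro rfl; exact hqp.2 (by simp)
  obtain ⟨l', r', σ', h', hsub, hrep⟩ := hstep
  have hsub' : subtermAt (subst σ l) d = some (subst σ' l') := by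
    rw [subtermAt_append, hs] at hsub
    simpa using hsub
  obtain ⟨v, w, n, rfl, hvvar⟩ :=
    redex_inside ho hlr hsub' ⟨l', r', σ', h', rfl⟩ hdne
  obtain ⟨s₀, s₁, hs₀, hrs, hrt⟩ := replaceAt_append_elim hrep
  rw [hs] at hs₀; cases hs₀
  obtain ⟨a, _, rfl⟩ := replace_in_subst (ho.1 l r hlr) hvvar hrs
  exact ⟨_, subtermAt_replaceAt_self hrt, l, r, _, hlr, rfl⟩

theorem persist_steps (ho : Orthogonal R) {t u : Trm F} {q : List ℕ} {ps : List (List ℕ)}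
    (hsteps : StepsAt R t u ps) (hnp : ∀ p ∈ ps, ¬ p <+: q) (hr : HasRedexAt R t q) :
    HasRedexAt R u q := by
  induction hsteps with
  | nil => exact hr
  | @cons t t' t'' p ps' hstep hrest ih =>
      refine ih (fun p hp => hnp p (List.mem_cons_of_mem _ hp)) ?_
      rcases not_prefix_cases (hnp p (List.mem_cons_self)) with h | h
      · exact persist_step ho hr hstep h
      · exact hasRedex_indep hstep h hr

theorem stepsAt_append {t m u : Trm F} {ps qs : List (List ℕ)}
    (h1 : StepsAt R t m ps) (h2 : StepsAt R m u qs) : StepsAt R t u (ps ++ qs) := by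
  induction h1 with
  | nil => exact h2
  | cons hstep _ ih => exact StepsAt.cons hstep (ih h2)

theorem rewrite_swap {t t₁ t₂ : Trm F} {p q : List ℕ} (h1 : RewriteAt R t t₁ p)
    (h2 : RewriteAt R t₁ t₂ q) (hpq : Indep p q) :
    ∃ c, RewriteAt R t c q ∧ RewriteAt R c t₂ p := by
  obtain ⟨l, r, σ, hlr, hsub, hrep⟩ := h1
  obtain ⟨l', r', σ', hlr', hsub', hrep'⟩ := h2
  obtain ⟨c, hc1, hc2⟩ := replaceAt_comm hpq hrep hrep'
  refine ⟨c, ⟨l', r', σ', hlr', ?_, hc1⟩, ⟨l, r, σ, hlr, ?_, hc2⟩⟩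
  · rw [← subtermAt_replaceAt_indep hpq hrep]; exact hsub'
  · rw [subtermAt_replaceAt_indep (indep_symm hpq) hc1]; exact hsub

theorem rewrite_past_steps {x x₁ z : Trm F} {p : List ℕ} {qs : List (List ℕ)}
    (hstep : RewriteAt R x x₁ p) (hsteps : StepsAt R x₁ z qs)
    (hind : ∀ q ∈ qs, Indep p q) :
    ∃ x₂, StepsAt R x x₂ qs ∧ RewriteAt R x₂ z p := by
  induction hsteps generalizing x with
  | nil => exact ⟨x, StepsAt.nil x, hstep⟩
  | @cons a b c q qs' hq hrest ih =>
      obtain ⟨d, hd1, hd2⟩ := rewrite_swap hstep hq (hind q (List.mem_cons_self))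
      obtain ⟨x₂, hx₂, hx₂'⟩ := ih hd2 (fun q hq => hind q (List.mem_cons_of_mem _ hq))
      exact ⟨x₂, StepsAt.cons hd1 hx₂, hx₂'⟩

theorem steps_partition (c : List ℕ → Bool) {x y : Trm F} {ps : List (List ℕ)}
    (hsteps : StepsAt R x y ps) (hpw : ps.Pairwise Indep) :
    ∃ z, StepsAt R x z (ps.filter c) ∧ StepsAt R z y (ps.filter (fun p => ¬ c p)) := by
  induction hsteps with
  | nil => exact ⟨_, StepsAt.nil _, StepsAt.nil _⟩
  | @cons t t' t'' p ps' hstep hrest ih =>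
      obtain ⟨z, hz1, hz2⟩ := ih hpw.of_cons
      by_cases hc : c p
      · refine ⟨z, ?_, ?_⟩
        · rw [List.filter_cons_of_pos hc]; exact StepsAt.cons hstep hz1
        · rw [List.filter_cons_of_neg (by simp [hc])]; exact hz2
      · obtain ⟨x₂, hx₂, hx₂'⟩ := rewrite_past_steps hstep hz1
          (fun q hq => (List.pairwise_cons.mp hpw).1 q (List.mem_of_mem_filter hq))
        refine ⟨x₂, ?_, ?_⟩
        · rw [List.filter_cons_of_neg (by simp [hc])]; exact hx₂
        · rw [List.filter_cons_of_pos (by simp [hc])]; exact StepsAt.cons hx₂' hz2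

theorem step_replace_indep {a b a₁ c : Trm F} {p q : List ℕ} (hstep : RewriteAt R a b p)
    (hpq : Indep p q) (hrep : replaceAt a q c = some a₁) :
    ∃ b₁, replaceAt b q c = some b₁ ∧ RewriteAt R a₁ b₁ p := by
  obtain ⟨l, r, σ, hlr, hsub, hrepl⟩ := hstep
  have hsub₁ : subtermAt a₁ p = some (subst σ l) := by
    rw [subtermAt_replaceAt_indep (indep_symm hpq) hrep]; exact hsub
  obtain ⟨b₁, hb₁⟩ := replaceAt_isSome (s := subst σ r) hsub₁
  obtain ⟨w, hw1, hw2⟩ := replaceAt_comm (indep_symm hpq) hrep hb₁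
  rw [hrepl] at hw1; cases hw1
  exact ⟨b₁, hw2, l, r, σ, hlr, hsub₁, hb₁⟩

theorem steps_replace_indep {m u m₁ c : Trm F} {q : List ℕ} {as : List (List ℕ)}
    (hsteps : StepsAt R m u as) (hind : ∀ a ∈ as, Indep a q)
    (hrep : replaceAt m q c = some m₁) :
    ∃ u₁, replaceAt u q c = some u₁ ∧ StepsAt R m₁ u₁ as := by
  induction hsteps generalizing m₁ with
  | nil => exact ⟨m₁, hrep, StepsAt.nil _⟩
  | @cons t t' t'' p ps' hstep hrest ih =>
      obtain ⟨b₁, hb₁, hstep₁⟩ := step_replace_indep hstep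
        (hind p (List.mem_cons_self)) hrep
      obtain ⟨u₁, hu₁, hsteps₁⟩ := ih (fun a ha => hind a (List.mem_cons_of_mem _ ha)) hb₁
      exact ⟨u₁, hu₁, StepsAt.cons hstep₁ hsteps₁⟩

theorem steps_lift {x s s' : Trm F} {p : List ℕ} {ws : List (List ℕ)}
    (hsub : subtermAt x p = some s) (hsteps : StepsAt R s s' ws) :
    ∃ x', replaceAt x p s' = some x' ∧ StepsAt R x x' (ws.map (p ++ ·)) := by
  induction hsteps generalizing x with
  | nil => exact ⟨x, replaceAt_self hsub, StepsAt.nil x⟩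
  | @cons a b c w ws' hstep hrest ih =>
      obtain ⟨l, r, σ, hlr, hsubw, hrepw⟩ := hstep
      obtain ⟨x₁, hx₁⟩ := replaceAt_isSome (s := b) hsub
      have hstep₁ : RewriteAt R x x₁ (p ++ w) := by
        refine ⟨l, r, σ, hlr, ?_, ?_⟩
        · rw [subtermAt_append, hsub]; simpa using hsubw
        · exact replaceAt_append_of hsub hrepw hx₁
      have hsub₁ : subtermAt x₁ p = some b := subtermAt_replaceAt_self hx₁
      obtain ⟨x', hx', hsteps'⟩ := ih hsub₁
      refine ⟨x', ?_, StepsAt.cons hstep₁ hsteps'⟩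
      rw [← replaceAt_replaceAt (b := c) hx₁]
      exact hx'

theorem steps_strip {x m : Trm F} {p₁ : List ℕ} {bs : List (List ℕ)}
    (hsteps : StepsAt R x m bs) (hbelow : ∀ b ∈ bs, p₁ <+: b) :
    ∀ {z : Trm F}, subtermAt m p₁ = some z →
    ∃ s ds, subtermAt x p₁ = some s ∧ StepsAt R s z ds ∧ bs = ds.map (p₁ ++ ·) ∧
      replaceAt x p₁ z = some m := by
  induction hsteps with
  | nil =>
      intro z hz
      exact ⟨z, [], hz, StepsAt.nil z, rfl, replaceAt_self hz⟩
  | @cons t t' t'' b bs' hstep hrest ih =>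
      intro z hz
      obtain ⟨d, rfl⟩ := hbelow b (List.mem_cons_self)
      obtain ⟨l, r, σ, hlr, hsubb, hrepb⟩ := hstep
      obtain ⟨s, s₁, hs, hrs, hrt⟩ := replaceAt_append_elim hrepb
      have hsub₁ : subtermAt t' p₁ = some s₁ := subtermAt_replaceAt_self hrt
      obtain ⟨s₁', ds, hs₁', hsteps', hds, hrep'⟩ :=
        ih (fun b hb => hbelow b (List.mem_cons_of_mem _ hb)) hz
      rw [hsub₁] at hs₁'; cases hs₁'
      have hstepd : RewriteAt R s s₁ d := by
        refine ⟨l, r, σ, hlr, ?_, hrs⟩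
        rw [subtermAt_append, hs] at hsubb; simpa using hsubb
      refine ⟨s, d :: ds, hs, StepsAt.cons hstepd hsteps', by simp [hds], ?_⟩
      rw [← replaceAt_replaceAt (b := z) hrt]
      exact hrep'

theorem stepsAt_cons_inv {x y : Trm F} {p : List ℕ} {ps : List (List ℕ)}
    (h : StepsAt R x y (p :: ps)) : ∃ t₁, RewriteAt R x t₁ p ∧ StepsAt R t₁ y ps := by
  cases h with | cons h1 h2 => exact ⟨_, h1, h2⟩

/-! ### parallel steps through substitutions -/

theorem indep_cons_ne {i j : ℕ} (hij : i ≠ j) (p q : List ℕ) : Indep (i :: p) (j :: q) := by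
  constructor
  · intro h; exact hij (List.cons_prefix_cons.mp h).1
  · intro h; exact hij ((List.cons_prefix_cons.mp h).1).symm

theorem set_append_len {α : Type*} : ∀ (pre : List α) (x : α) (l : List α) (y : α),
    (pre ++ x :: l).set pre.length y = pre ++ y :: l
  | [], x, l, y => rfl
  | a :: pre, x, l, y => by simp [set_append_len pre x l y]

theorem get_append_len {α : Type*} : ∀ (pre : List α) (x : α) (l : List α),
    (pre ++ x :: l)[pre.length]? = some x
  | [], x, l => by simp
  | a :: pre, x, l => by simpa using get_append_len pre x l

theorem subst_steps_list {R : Set (Rule F)} {σ τ : ℕ → Trm F} (f : F) :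
    ∀ (ts : List (Trm F)) (pre : List (Trm F)),
    (∀ a ∈ ts, ∃ os, os.Pairwise Indep ∧ StepsAt R (subst σ a) (subst τ a) os) →
    ∃ os, os.Pairwise Indep ∧ (∀ o ∈ os, ∃ i w, pre.length ≤ i ∧ o = i :: w) ∧
      StepsAt R (app f (pre ++ ts.map (subst σ))) (app f (pre ++ ts.map (subst τ))) os := by
  intro ts
  induction ts with
  | nil => intro pre _; exact ⟨[], by simp, by simp, StepsAt.nil _⟩
  | cons a ts ih =>
      intro pre h
      obtain ⟨osa, hosa, hstepsa⟩ := h a (List.mem_cons_self)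
      simp only [List.map_cons]
      have hsub : subtermAt (app f (pre ++ subst σ a :: ts.map (subst σ)))
          [pre.length] = some (subst σ a) := by
        rw [subtermAt_app_cons, get_append_len]; simp
      obtain ⟨x', hx', hsteps'⟩ := steps_lift hsub hstepsa
      have hx'eq : x' = app f (pre ++ subst τ a :: ts.map (subst σ)) := by
        have : replaceAt (app f (pre ++ subst σ a :: ts.map (subst σ)))
            [pre.length] (subst τ a) =
            some (app f ((pre ++ subst σ a :: ts.map (subst σ)).set pre.length
              (subst τ a))) := by
          rw [replaceAt_app_cons, get_append_len]; simp
        rw [this] at hx'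
        cases hx'
        rw [set_append_len]
      subst hx'eq
      obtain ⟨ost, host, hshape, hstepst⟩ := ih (pre ++ [subst τ a])
        (fun b hb => h b (List.mem_cons_of_mem _ hb))
      simp only [List.append_assoc, List.singleton_append] at hstepst
      refine ⟨osa.map ([pre.length] ++ ·) ++ ost, ?_, ?_, ?_⟩
      · rw [List.pairwise_append]
        refine ⟨List.pairwise_map.mpr (hosa.imp fun hww => indep_append_lift _ hww), host, ?_⟩
        intro o1 ho1 o2 ho2
        obtain ⟨w, hw, rfl⟩ := List.mem_map.mp ho1
        obtain ⟨i, w2, hi, rfl⟩ := hshape o2 ho2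
        have : pre.length ≠ i := by simp at hi; omega
        exact indep_cons_ne this _ _
      · intro o ho
        rcases List.mem_append.mp ho with ho | ho
        · obtain ⟨w, hw, rfl⟩ := List.mem_map.mp ho
          exact ⟨pre.length, w, le_refl _, rfl⟩
        · obtain ⟨i, w, hi, rfl⟩ := hshape o ho
          exact ⟨i, w, by simp at hi; omega, rfl⟩
      · exact stepsAt_append hsteps' hstepst

theorem subst_steps {R : Set (Rule F)} : ∀ {r : Trm F} {σ τ : ℕ → Trm F},
    (∀ n ∈ varList r, ∃ ws, ws.Pairwise Indep ∧ StepsAt R (σ n) (τ n) ws) →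
    ∃ os, os.Pairwise Indep ∧ StepsAt R (subst σ r) (subst τ r) os := by
  intro r
  induction r using trm_ind with
  | hv n =>
      intro σ τ h
      obtain ⟨ws, hws, hsteps⟩ := h n (by simp)
      exact ⟨ws, hws, by simpa using hsteps⟩
  | ha f ts ih =>
      intro σ τ h
      obtain ⟨os, hos, _, hsteps⟩ := subst_steps_list f ts []
        (fun a ha => ih a ha (fun n hn => h n (by
          simp only [varList_app, List.mem_flatMap]; exact ⟨a, ha, hn⟩)))
      exact ⟨os, hos, by simpa using hsteps⟩

/-! ### backward reconstruction of a redex pattern -/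

theorem replace_inverse {t t' b c : Trm F} {p : List ℕ} (h : replaceAt t p c = some t')
    (hb : subtermAt t p = some b) : replaceAt t' p b = some t := by
  rw [replaceAt_replaceAt (b := b) h]
  exact replaceAt_self hb

theorem back_reconstruct {R : Set (Rule F)} (ho : Orthogonal R) {l₂ r₂ : Trm F}
    (hl₂ : (l₂, r₂) ∈ R) {s z : Trm F} {ds : List (List ℕ)}
    (hsteps : StepsAt R s z ds) :
    ∀ {τ : ℕ → Trm F}, ds.Pairwise Indep →
    (∀ d ∈ ds, ∃ e, StrictPref e d ∧ HasRedexAt R s e) →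
    z = subst τ l₂ →
    ∃ τ₀, s = subst τ₀ l₂ ∧ (∀ m, m ∉ varList l₂ → τ₀ m = τ m) ∧
      ∀ n ∈ varList l₂, ∃ ws, ws.Pairwise Indep ∧ StepsAt R (τ₀ n) (τ n) ws ∧
        ∀ w ∈ ws, ∃ v, subtermAt l₂ v = some (var n) ∧ (v ++ w) ∈ ds := by
  induction hsteps with
  | nil =>
      intro τ _ _ heq
      exact ⟨τ, heq, fun _ _ => rfl, fun n _ => ⟨[], by simp, StepsAt.nil _, by simp⟩⟩
  | @cons s s₁ z d₁ ds' hstep hrest ih =>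
      intro τ hpw hwit heq
      -- witnesses for the tail, in s₁
      have hwit₁ : ∀ d ∈ ds', ∃ e, StrictPref e d ∧ HasRedexAt R s₁ e := by
        intro d hd
        obtain ⟨e, hed, hre⟩ := hwit d (List.mem_cons_of_mem _ hd)
        refine ⟨e, hed, ?_⟩
        have hnd : ¬ d₁ <+: e := by
          intro hprf
          exact ((List.pairwise_cons.mp hpw).1 d hd).1 (hprf.trans hed.1)
        rcases not_prefix_cases hnd with h | h
        · exact persist_step ho hre hstep h
        · exact hasRedex_indep hstep h hre
      obtain ⟨τ₁, hs₁, hoff, hvar⟩ := ih hpw.of_cons hwit₁ heq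
      -- own witness
      obtain ⟨e₁, he₁, hre₁⟩ := hwit d₁ (List.mem_cons_self)
      have hd₁ne : d₁ ≠ [] := by
        rintro rfl
        exact he₁.2 (List.prefix_nil.mp he₁.1)
      -- find a variable position of l₂ along d₁
      have hkey : ∃ v n, subtermAt l₂ v = some (var n) ∧ v <+: d₁ := by
        by_cases hcase : e₁ = []
        · subst hcase
          obtain ⟨s₀, hs₀, lst, rst, sst, hlst, rfl⟩ := hre₁
          simp only [subtermAt_nil, Option.some_inj] at hs₀
          by_cases hvst : IsVar lst
          · obtain ⟨n₂, rfl⟩ := var_lhs_of_var_lhs ho hlst hl₂ hvst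
            exact ⟨[], n₂, by simp, List.nil_prefix⟩
          · obtain ⟨l', r', σ', hl', hsub', hrep'⟩ := hstep
            rw [hs₀] at hsub'
            obtain ⟨vst, wst, nst, hd₁eq, hvv⟩ :=
              redex_inside ho hlst hsub' ⟨l', r', σ', hl', rfl⟩ hd₁ne
            -- identify lst with l₂ via s₁
            rw [hs₀] at hrep'
            obtain ⟨a, _, hs₁'⟩ := replace_in_subst (ho.1 _ _ hlst) hvv (by
              rw [← hd₁eq]; exact hrep')
            have := root_rules_eq ho hlst hl₂ hvst (σ := Function.update sst nst a)
              (τ := τ₁) (by rw [← hs₁', hs₁])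
            exact ⟨vst, nst, this.1 ▸ hvv, hd₁eq ▸ (vst.prefix_append wst)⟩
        · have hre₁' : HasRedexAt R s₁ e₁ := persist_step ho hre₁ hstep he₁
          obtain ⟨u, hu, hured⟩ := hre₁'
          rw [hs₁] at hu
          obtain ⟨v, w', n, he₁eq, hvv⟩ := redex_inside ho hl₂ hu hured hcase
          exact ⟨v, n, hvv, (he₁eq ▸ v.prefix_append w').trans he₁.1⟩
      obtain ⟨v, n, hvv, hvd⟩ := hkey
      obtain ⟨w, rfl⟩ := hvd
      -- reverse the step through the variable position
      obtain ⟨l', r', σ', hl', hsub', hrep'⟩ := hstep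
      have hrevrep : replaceAt s₁ (v ++ w) (subst σ' l') = some s :=
        replace_inverse hrep' hsub'
      rw [hs₁] at hrevrep
      obtain ⟨a, hra, hseq⟩ := replace_in_subst (ho.1 _ _ hl₂) hvv hrevrep
      -- the forward step a → τ₁ n at position w
      have hsubn : subtermAt (τ₁ n) w = some (subst σ' r') := by
        have h1 : subtermAt s₁ (v ++ w) = some (subst σ' r') :=
          subtermAt_replaceAt_self hrep'
        rw [hs₁, subtermAt_append, subtermAt_subst τ₁ hvv] at h1
        simpa using h1
      have hstepa : RewriteAt R a (τ₁ n) w := by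
        refine ⟨l', r', σ', hl', subtermAt_replaceAt_self hra, ?_⟩
        rw [replaceAt_replaceAt (b := subst σ' r') hra]
        exact replaceAt_self hsubn
      have hnmem : n ∈ varList l₂ := mem_varList_of_subterm_var hvv
      refine ⟨Function.update τ₁ n a, hseq, ?_, ?_⟩
      · intro m hm
        have hmn : m ≠ n := fun hh => hm (hh ▸ hnmem)
        rw [Function.update_of_ne hmn]
        exact hoff m hm
      · intro m hmem
        by_cases hmn : m = n
        · subst hmn
          obtain ⟨ws, hws, hsteps_ws, hprov⟩ := hvar m hmem
          refine ⟨w :: ws, ?_, ?_, ?_⟩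
          · rw [List.pairwise_cons]
            refine ⟨?_, hws⟩
            intro w' hw'
            obtain ⟨v', hv', hmem'⟩ := hprov w' hw'
            have hvv' : v' = v := var_pos_unique (ho.1 _ _ hl₂) hv' hvv
            subst hvv'
            exact indep_append_cancel ((List.pairwise_cons.mp hpw).1 _ hmem')
          · rw [Function.update_self]
            exact StepsAt.cons hstepa hsteps_ws
          · intro w' hw'
            rcases List.mem_cons.mp hw' with rfl | hw'
            · exact ⟨v, hvv, List.mem_cons_self⟩
            · obtain ⟨v', hv', hmem'⟩ := hprov w' hw'
              exact ⟨v', hv', List.mem_cons_of_mem _ hmem'⟩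
        · obtain ⟨ws, hws, hsteps_ws, hprov⟩ := hvar m hmem
          rw [Function.update_of_ne hmn]
          exact ⟨ws, hws, hsteps_ws,
            fun w' hw' => (hprov w' hw').imp fun v' ⟨h1, h2⟩ =>
              ⟨h1, List.mem_cons_of_mem _ h2⟩⟩

/-! ### the key swap lemma -/

theorem prefix_antisymm {p q : List ℕ} (h1 : p <+: q) (h2 : q <+: p) : p = q :=
  h1.eq_of_length (le_antisymm h1.length_le h2.length_le)

theorem indep_symmetric : Symmetric Indep := fun _ _ h => indep_symm h

theorem steps_subterm_indep {R : Set (Rule F)} {m u : Trm F} {q : List ℕ}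
    {as : List (List ℕ)} (hsteps : StepsAt R m u as) (hind : ∀ a ∈ as, Indep a q) :
    subtermAt u q = subtermAt m q := by
  induction hsteps with
  | nil => rfl
  | @cons t t' t'' p ps' hstep hrest ih =>
      rw [ih (fun a ha => hind a (List.mem_cons_of_mem _ ha)),
        rewriteAt_subterm_indep hstep (hind p (List.mem_cons_self))]

theorem pn_out_swap {R : Set (Rule F)} (ho : Orthogonal R) {x u u₁ : Trm F}
    (hpn : ParNonOut R x u) (hout : OutStep R u u₁) :
    ∃ x₁, OutStep R x x₁ ∧ ParStep R x₁ u₁ := by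
  obtain ⟨ps, hpw, hwit, hsteps⟩ := hpn
  obtain ⟨p₁, hrw₁, hout₁⟩ := hout
  -- witness redexes persist to u
  have hpersist : ∀ q, (∀ p' ∈ ps, ¬ p' <+: q) → HasRedexAt R x q → HasRedexAt R u q :=
    fun q hq hr => persist_steps ho hsteps hq hr
  have hwit_pers : ∀ p ∈ ps, ∀ q, StrictPref q p → (∀ p' ∈ ps, ¬ p' <+: q) := by
    intro p hp q hq p' hp' hpq
    by_cases hpp : p' = p
    · subst hpp
      exact hq.2 (prefix_antisymm hq.1 hpq)
    · exact (haveI : Std.Symm Indep := ⟨fun a b h => indep_symmetric h⟩; List.Pairwise.forall hpw hp' hp hpp).1 (hpq.trans hq.1)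
  -- no contracted position is above (or equal to) p₁
  have hstepA : ∀ p ∈ ps, ¬ p <+: p₁ := by
    intro p hp hpp₁
    obtain ⟨q, hq, hrq⟩ := hwit p hp
    have hqu : HasRedexAt R u q := hpersist q (hwit_pers p hp q hq) hrq
    refine hout₁ q ⟨hq.1.trans hpp₁, ?_⟩ hqu
    rintro rfl
    exact hq.2 (prefix_antisymm hq.1 hpp₁)
  -- partition the parallel step into the part below p₁ and the part parallel to p₁
  obtain ⟨m, hbs, has⟩ := steps_partition (fun p => decide (p₁ <+: p)) hsteps hpw
  set bs := ps.filter (fun p => decide (p₁ <+: p)) with hbs_def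
  set as := ps.filter (fun p => ¬ decide (p₁ <+: p)) with has_def
  have hbs_mem : ∀ b ∈ bs, b ∈ ps ∧ p₁ <+: b := by
    intro b hb
    have := List.mem_filter.mp hb
    exact ⟨this.1, by simpa using this.2⟩
  have has_mem : ∀ a ∈ as, a ∈ ps ∧ Indep a p₁ := by
    intro a ha
    have := List.mem_filter.mp ha
    exact ⟨this.1, hstepA a this.1, by simpa using this.2⟩
  -- the pattern of the outer redex at p₁ in u
  obtain ⟨l₂, r₂, τ, hl₂, hsubu, hrepu⟩ := hrw₁
  have hsubm : subtermAt m p₁ = some (subst τ l₂) := by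
    rw [← steps_subterm_indep has (fun a ha => (has_mem a ha).2)]
    exact hsubu
  -- strip the below-steps to the subterm at p₁
  obtain ⟨s, ds, hsubx, hsteps_ds, hbs_eq, hrepm⟩ :=
    steps_strip hbs (fun b hb => (hbs_mem b hb).2) hsubm
  -- pairwise independence of the stripped positions
  have hbs_pw : bs.Pairwise Indep := hpw.sublist (List.filter_sublist)
  have hds_pw : ds.Pairwise Indep := by
    rw [hbs_eq] at hbs_pw
    exact (List.pairwise_map.mp hbs_pw).imp fun hww => indep_append_cancel hww
  -- witnesses for the stripped steps
  have hds_wit : ∀ d ∈ ds, ∃ e, StrictPref e d ∧ HasRedexAt R s e := by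
    intro d hd
    have hbmem : (p₁ ++ d) ∈ bs := by rw [hbs_eq]; exact List.mem_map_of_mem hd
    obtain ⟨hpmem, _⟩ := hbs_mem _ hbmem
    obtain ⟨q, hq, hrq⟩ := hwit _ hpmem
    have hp₁q : p₁ <+: q := by
      rcases List.prefix_or_prefix_of_prefix hq.1 (p₁.prefix_append d) with h | h
      · rcases eq_or_ne q p₁ with rfl | hne
        · exact List.prefix_refl _
        · exact absurd (hpersist q (hwit_pers _ hpmem q hq) hrq)
            (hout₁ q ⟨h, hne⟩)
      · exact h
    obtain ⟨e, rfl⟩ := hp₁q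
    refine ⟨e, strictPref_append_cancel hq, ?_⟩
    obtain ⟨sq, hsq, hredq⟩ := hrq
    rw [subtermAt_append, hsubx] at hsq
    exact ⟨sq, by simpa using hsq, hredq⟩
  -- reconstruct the pattern in x
  obtain ⟨τ₀, hs_eq, hoff, hvar⟩ :=
    back_reconstruct ho hl₂ hsteps_ds hds_pw hds_wit rfl
  -- the outermost step in x
  obtain ⟨x₁, hrepx₁⟩ := replaceAt_isSome (s := subst τ₀ r₂) hsubx
  have hrwx : RewriteAt R x x₁ p₁ := ⟨l₂, r₂, τ₀, hl₂, by rw [hsubx, hs_eq], hrepx₁⟩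
  have houtx : ∀ q, StrictPref q p₁ → ¬ HasRedexAt R x q := by
    intro q hq hrq
    have : HasRedexAt R u q := by
      refine hpersist q ?_ hrq
      intro p' hp' hpq
      exact hstepA p' hp' (hpq.trans hq.1)
    exact hout₁ q hq this
  -- the residual steps inside the contractum
  have hresid : ∀ n ∈ varList r₂, ∃ ws, ws.Pairwise Indep ∧ StepsAt R (τ₀ n) (τ n) ws := by
    intro n _
    by_cases hn : n ∈ varList l₂
    · obtain ⟨ws, h1, h2, _⟩ := hvar n hn
      exact ⟨ws, h1, h2⟩
    · exact ⟨[], by simp, by rw [hoff n hn]; exact StepsAt.nil _⟩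
  obtain ⟨os, hos_pw, hos_steps⟩ := subst_steps hresid
  have hsubx₁ : subtermAt x₁ p₁ = some (subst τ₀ r₂) := subtermAt_replaceAt_self hrepx₁
  obtain ⟨m₁, hrepm₁, hsteps_os⟩ := steps_lift hsubx₁ hos_steps
  -- m₁ is also obtained from x directly
  have hrepm₁' : replaceAt x p₁ (subst τ r₂) = some m₁ := by
    rw [← replaceAt_replaceAt (b := subst τ r₂) hrepx₁]
    exact hrepm₁
  -- transfer the parallel steps to after the contraction
  have hrepm₂ : replaceAt m p₁ (subst τ r₂) = some m₁ := by
    rw [replaceAt_replaceAt (b := subst τ r₂) hrepm]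
    exact hrepm₁'
  obtain ⟨u₁', hrepu₁', hsteps_as⟩ :=
    steps_replace_indep has (fun a ha => (has_mem a ha).2) hrepm₂
  rw [hrepu] at hrepu₁'; cases hrepu₁'
  -- assemble
  refine ⟨x₁, ⟨p₁, hrwx, houtx⟩, os.map (p₁ ++ ·) ++ as, ?_, stepsAt_append hsteps_os hsteps_as⟩
  rw [List.pairwise_append]
  refine ⟨List.pairwise_map.mpr (hos_pw.imp fun h => indep_append_lift _ h), ?_, ?_⟩
  · exact hpw.sublist (List.filter_sublist)
  · intro o ho a ha
    obtain ⟨w, _, rfl⟩ := List.mem_map.mp ho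
    exact indep_append_left w (indep_symm (has_mem a ha).2)

/-! ### factorization of parallel steps and assembly -/

theorem par_factor {R : Set (Rule F)} (ho : Orthogonal R) :
    ∀ {x y : Trm F} {ps : List (List ℕ)}, StepsAt R x y ps → ps.Pairwise Indep →
    ∃ m os qs, (∀ o ∈ os, o ∈ ps) ∧ (∀ q ∈ qs, q ∈ ps) ∧ qs.Pairwise Indep ∧
      StepsAt R x m os ∧ Relation.ReflTransGen (OutStep R) x m ∧
      (∀ q ∈ qs, ∃ e, StrictPref e q ∧ HasRedexAt R m e) ∧ StepsAt R m y qs := by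
  intro x y ps
  induction ps generalizing x y with
  | nil =>
      intro hsteps _
      cases hsteps
      exact ⟨x, [], [], by simp, by simp, by simp, StepsAt.nil x, Relation.ReflTransGen.refl,
        by simp, StepsAt.nil x⟩
  | cons p ps' ih =>
      intro hsteps hpw
      obtain ⟨t₁, hstep, hrest⟩ := stepsAt_cons_inv hsteps
      by_cases hcase : ∃ q, StrictPref q p ∧ HasRedexAt R x q
      · -- non-outermost step: postpone it
        obtain ⟨q0, hq0, hrq0⟩ := hcase
        obtain ⟨x₂, hx₂steps, hx₂step⟩ := rewrite_past_steps hstep hrest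
          (fun r hr => (List.pairwise_cons.mp hpw).1 r hr)
        obtain ⟨m, os, qs, hos, hqs, hqs_pw, hsteps_os, hrtg, hwits, hsteps_qs⟩ :=
          ih hx₂steps hpw.of_cons
        refine ⟨m, os, qs ++ [p], fun o hoo => List.mem_cons_of_mem _ (hos o hoo),
          ?_, ?_, hsteps_os, hrtg, ?_, ?_⟩
        · intro r hr
          rcases List.mem_append.mp hr with hr | hr
          · exact List.mem_cons_of_mem _ (hqs r hr)
          · simp at hr; subst hr; exact List.mem_cons_self
        · rw [List.pairwise_append]
          refine ⟨hqs_pw, by simp, ?_⟩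
          intro q' hq' p' hp'
          simp at hp'; subst hp'
          exact indep_symm ((List.pairwise_cons.mp hpw).1 q' (hqs q' hq'))
        · intro r hr
          rcases List.mem_append.mp hr with hr | hr
          · exact hwits r hr
          · simp at hr; rw [hr]
            refine ⟨q0, hq0, persist_steps ho hsteps_os ?_ hrq0⟩
            intro o hoo hpre
            have hind : Indep p o := (List.pairwise_cons.mp hpw).1 o (hos o hoo)
            exact hind.2 (hpre.trans hq0.1)
        · exact stepsAt_append hsteps_qs (StepsAt.cons hx₂step (StepsAt.nil y))
      · -- outermost step: keep it in front
        push_neg at hcase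
        obtain ⟨m, os, qs, hos, hqs, hqs_pw, hsteps_os, hrtg, hwits, hsteps_qs⟩ :=
          ih hrest hpw.of_cons
        refine ⟨m, p :: os, qs, ?_, fun q hq => List.mem_cons_of_mem _ (hqs q hq),
          hqs_pw, StepsAt.cons hstep hsteps_os, ?_, hwits, hsteps_qs⟩
        · intro o hoo
          rcases List.mem_cons.mp hoo with rfl | hoo
          · exact List.mem_cons_self
          · exact List.mem_cons_of_mem _ (hos o hoo)
        · exact Relation.ReflTransGen.head
            ⟨p, hstep, fun q hq hr => hcase q hq hr⟩ hrtg

theorem par_to_pn {R : Set (Rule F)} (ho : Orthogonal R) {x y : Trm F}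
    (h : ParStep R x y) :
    ∃ m, Relation.ReflTransGen (OutStep R) x m ∧ ParNonOut R m y := by
  obtain ⟨ps, hpw, hsteps⟩ := h
  obtain ⟨m, os, qs, _, _, hqs_pw, _, hrtg, hwits, hsteps_qs⟩ := par_factor ho hsteps hpw
  exact ⟨m, hrtg, qs, hqs_pw, hwits, hsteps_qs⟩

theorem pn_serialize {R : Set (Rule F)} (ho : Orthogonal R) :
    ∀ {x y : Trm F} {ps : List (List ℕ)}, StepsAt R x y ps → ps.Pairwise Indep →
    (∀ p ∈ ps, ∃ q, StrictPref q p ∧ HasRedexAt R x q) →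
    Relation.ReflTransGen (NonOutStep R) x y := by
  intro x y ps hsteps
  induction hsteps with
  | nil => intro _ _; exact Relation.ReflTransGen.refl
  | @cons t t₁ y p ps' hstep hrest ih =>
      intro hpw hwit
      obtain ⟨q, hq, hrq⟩ := hwit p (List.mem_cons_self)
      refine Relation.ReflTransGen.head ⟨p, hstep, q, hq, hrq⟩ (ih hpw.of_cons ?_)
      intro p' hp'
      obtain ⟨q', hq', hrq'⟩ := hwit p' (List.mem_cons_of_mem _ hp')
      refine ⟨q', hq', ?_⟩
      have hnp : ¬ p <+: q' := by
        intro hpre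
        exact ((List.pairwise_cons.mp hpw).1 p' hp').1 (hpre.trans hq'.1)
      rcases not_prefix_cases hnp with h | h
      · exact persist_step ho hrq' hstep h
      · exact hasRedex_indep hstep h hrq'

theorem pn_to_nonout {R : Set (Rule F)} (ho : Orthogonal R) {x y : Trm F}
    (h : ParNonOut R x y) : Relation.ReflTransGen (NonOutStep R) x y := by
  obtain ⟨ps, hpw, hwit, hsteps⟩ := h
  exact pn_serialize ho hsteps hpw hwit

theorem rewrite_classify {R : Set (Rule F)} {t u : Trm F} (h : Rewrite R t u) :
    OutStep R t u ∨ ParNonOut R t u := by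
  obtain ⟨p, hrw⟩ := h
  by_cases hcase : ∃ q, StrictPref q p ∧ HasRedexAt R t q
  · obtain ⟨q, h1, h2⟩ := hcase
    refine Or.inr ⟨[p], by simp, ?_, StepsAt.cons hrw (StepsAt.nil u)⟩
    intro p' hp'
    rcases List.mem_singleton.mp hp' with rfl
    exact ⟨q, h1, h2⟩
  · push_neg at hcase
    exact Or.inl ⟨p, hrw, fun q hq hr => hcase q hq hr⟩

theorem pn_out {R : Set (Rule F)} (ho : Orthogonal R) {x u u₁ : Trm F}
    (hpn : ParNonOut R x u) (hout : OutStep R u u₁) :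
    ∃ b, Relation.ReflTransGen (OutStep R) x b ∧ ParNonOut R b u₁ := by
  obtain ⟨x₁, h1, h2⟩ := pn_out_swap ho hpn hout
  obtain ⟨m, h3, h4⟩ := par_to_pn ho h2
  exact ⟨m, Relation.ReflTransGen.head h1 h3, h4⟩

theorem pn_outstar {R : Set (Rule F)} (ho : Orthogonal R) {x u w : Trm F}
    (hpn : ParNonOut R x u) (h : Relation.ReflTransGen (OutStep R) u w) :
    ∃ b, Relation.ReflTransGen (OutStep R) x b ∧ ParNonOut R b w := by
  induction h using Relation.ReflTransGen.head_induction_on generalizing x with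
  | refl => exact ⟨x, Relation.ReflTransGen.refl, hpn⟩
  | head hstep _ ih =>
      obtain ⟨b₁, h1, h2⟩ := pn_out ho hpn hstep
      obtain ⟨b, h3, h4⟩ := ih h2
      exact ⟨b, h1.trans h3, h4⟩

theorem pnstar_out {R : Set (Rule F)} (ho : Orthogonal R) {w u t' : Trm F}
    (h : Relation.ReflTransGen (ParNonOut R) w u) (hstep : OutStep R u t') :
    ∃ w', Relation.ReflTransGen (OutStep R) w w' ∧
      Relation.ReflTransGen (ParNonOut R) w' t' := by
  induction h using Relation.ReflTransGen.head_induction_on with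
  | refl =>
      exact ⟨t', Relation.ReflTransGen.single hstep, Relation.ReflTransGen.refl⟩
  | head hpn _ ih =>
      obtain ⟨a', h1, h2⟩ := ih
      obtain ⟨b, h3, h4⟩ := pn_outstar ho hpn h1
      exact ⟨b, h3, Relation.ReflTransGen.head h4 h2⟩

theorem main_aux {R : Set (Rule F)} (ho : Orthogonal R) {t t' : Trm F}
    (h : RewriteStar R t t') :
    ∃ w, Relation.ReflTransGen (OutStep R) t w ∧
      Relation.ReflTransGen (ParNonOut R) w t' := by
  induction h with
  | refl => exact ⟨t, Relation.ReflTransGen.refl, Relation.ReflTransGen.refl⟩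
  | tail hsteps hstep ih =>
      obtain ⟨w, hout, hpn⟩ := ih
      rcases rewrite_classify hstep with hcase | hcase
      · obtain ⟨w', h1, h2⟩ := pnstar_out ho hpn hcase
        exact ⟨w', hout.trans h1, h2⟩
      · exact ⟨w, hout, hpn.tail hcase⟩

theorem pnstar_nonout {R : Set (Rule F)} (ho : Orthogonal R) {w t' : Trm F}
    (h : Relation.ReflTransGen (ParNonOut R) w t') :
    Relation.ReflTransGen (NonOutStep R) w t' := by
  induction h with
  | refl => exact Relation.ReflTransGen.refl
  | tail _ hstep ih => exact ih.trans (pn_to_nonout ho hstep)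

end SplitAux


/-- any finite reduction of an orthogonal TRS can be rearranged into
an outermost phase followed by a non-outermost phase. -/
theorem split_out_and_nonout {F : Type} (R : Set (Rule F))
    (ho : Orthogonal R) (t t' : Trm F) (h : RewriteStar R t t') :
    ∃ tHat, Relation.ReflTransGen (OutStep R) t tHat ∧
      Relation.ReflTransGen (NonOutStep R) tHat t' := by
  obtain ⟨w, hout, hpn⟩ := SplitAux.main_aux ho h
  exact ⟨w, hout, SplitAux.pnstar_nonout ho hpn⟩
end

section
/- Let (Σ_d, Σ_s, R_d, R_s) be a stream specification with R_d = ∅ in which every stream symbol has at most one argument of sort s. Then in every ground term t of sort s with an outermost redex at position p, the position p is a prefix of every redex position of t; i.e., every term has at most one maximal (outermost) redex position with respect to the prefix order, and it lies above all other redexes. -/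
open Trm

variable {F : Type}

section AuxOut

variable {F : Type}

lemma count_le_one_get? {l : List Bool} (h : l.count true ≤ 1)
    {i j : ℕ} (hi : l[i]? = some true) (hj : l[j]? = some true) : i = j := by
  by_contra hne
  wlog hlt : i < j generalizing i j
  · exact this hj hi (Ne.symm hne) (by omega)
  have h1 : true ∈ l.take j := by
    have hh : (l.take j)[i]? = some true := by
      rw [List.getElem?_take_of_lt hlt]; exact hi
    exact List.mem_of_getElem? hh
  have h2 : true ∈ l.drop j := by
    have hh : (l.drop j)[0]? = some true := by
      rw [List.getElem?_drop]; simpa using hj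
    exact List.mem_of_getElem? hh
  have ht := List.take_append_drop j l
  have hc : l.count true = (l.take j).count true + (l.drop j).count true := by
    conv_lhs => rw [← ht]
    exact List.count_append
  have c1 : 1 ≤ (l.take j).count true := List.count_pos_iff.mpr h1
  have c2 : 1 ≤ (l.drop j).count true := List.count_pos_iff.mpr h2
  omega

lemma ws_app_sort {ar : F → List Bool × Bool} {vs : ℕ → Bool} {f : F} {ts : List (Trm F)} {b : Bool}
    (h : WS ar vs (app f ts) b) : b = (ar f).2 := by
  cases h; rfl

lemma ws_app_args {ar : F → List Bool × Bool} {vs : ℕ → Bool} {f : F} {ts : List (Trm F)} {b : Bool}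
    (h : WS ar vs (app f ts) b) :
    ts.length = (ar f).1.length ∧
      ∀ (i : ℕ) t bi, ts[i]? = some t → (ar f).1[i]? = some bi → WS ar vs t bi := by
  cases h; exact ⟨‹_›, ‹_›⟩

lemma symOver_app {S : Set F} {f : F} {ts : List (Trm F)} (h : SymOver S (app f ts)) :
    f ∈ S ∧ ∀ t ∈ ts, SymOver S t := by
  cases h; exact ⟨‹_›, ‹_›⟩

/-- every subterm of a data-sorted term that is an application has data result sort -/
lemma ws_false_down (S : StreamSpec F) : ∀ (p : List ℕ) (t : Trm F) (f : F) (us : List (Trm F)),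
    SymOver (S.Sd ∪ S.Ss ∪ {S.cons}) t → WS S.ar S.vs t false →
    subtermAt t p = some (app f us) → (S.ar f).2 = false := by
  intro p
  induction p with
  | nil =>
    intro t f us hsym hws hsub
    simp [subtermAt] at hsub
    subst hsub
    exact (ws_app_sort hws).symm
  | cons i p ih =>
    intro t f us hsym hws hsub
    cases t with
    | var n => simp [subtermAt] at hsub
    | app g ts =>
      simp only [subtermAt, Option.bind_eq_some_iff] at hsub
      obtain ⟨u, hu, hup⟩ := hsub
      obtain ⟨hlen, hargs⟩ := ws_app_args hws
      obtain ⟨hgmem, hts⟩ := symOver_app hsym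
      have hgsort := ws_app_sort hws
      -- g must be a data symbol
      have hgd : g ∈ S.Sd := by
        rcases hgmem with (hgd | hgs) | hgc
        · exact hgd
        · have := S.s_res g hgs; rw [← hgsort] at this; simp at this
        · have hgc' : g = S.cons := by simpa using hgc
          subst hgc'; rw [S.cons_ar] at hgsort; simp at hgsort
      -- the i-th argument sort
      have hilt : i < ts.length := by
        by_contra hcon
        rw [List.getElem?_eq_none (by omega)] at hu; simp at hu
      have hilt' : i < (S.ar g).1.length := hlen ▸ hilt
      obtain ⟨bi, hbi⟩ : ∃ bi, (S.ar g).1[i]? = some bi := by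
        cases hb : (S.ar g).1[i]? with
        | none => rw [List.getElem?_eq_none_iff] at hb; omega
        | some b => exact ⟨b, rfl⟩
      have hbif : bi = false := (S.d_sorts g hgd).1 bi (List.mem_of_getElem? hbi)
      have hwu : WS S.ar S.vs u false := hbif ▸ hargs i u bi hu hbi
      exact ih u f us (hts u (List.mem_of_getElem? hu)) hwu hup

/-- chain lemma: positions of stream-rooted subterms are prefix-comparable -/
lemma stream_positions_chain (S : StreamSpec F)
    (hone : ∀ f ∈ S.Ss, ((S.ar f).1.count true) ≤ 1) :
    ∀ (p q : List ℕ) (t : Trm F) (b : Bool),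
      SymOver (S.Sd ∪ S.Ss ∪ {S.cons}) t → WS S.ar S.vs t b →
      ∀ f us g vss, subtermAt t p = some (app f us) → f ∈ S.Ss →
        subtermAt t q = some (app g vss) → g ∈ S.Ss → p <+: q ∨ q <+: p := by
  intro p
  induction p with
  | nil => intros; exact Or.inl (List.nil_prefix)
  | cons i p ih =>
    intro q t b hsym hws f us g vss hpf hfS hqg hgS
    cases q with
    | nil => exact Or.inr (List.nil_prefix)
    | cons j q' =>
      cases t with
      | var n => simp [subtermAt] at hpf
      | app h ts =>
        simp only [subtermAt, Option.bind_eq_some_iff] at hpf hqg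
        obtain ⟨u, hu, hup⟩ := hpf
        obtain ⟨v, hv, hvq⟩ := hqg
        obtain ⟨hlen, hargs⟩ := ws_app_args hws
        obtain ⟨hhmem, hts⟩ := symOver_app hsym
        -- argument sorts at i and j
        have getbi : ∀ (k : ℕ) (w : Trm F), ts[k]? = some w → ∃ bk, (S.ar h).1[k]? = some bk := by
          intro k w hw
          have hklt : k < ts.length := by
            by_contra hcon
            rw [List.getElem?_eq_none (by omega)] at hw; simp at hw
          cases hb : (S.ar h).1[k]? with
          | none => rw [List.getElem?_eq_none_iff] at hb; omega
          | some b => exact ⟨b, rfl⟩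
        obtain ⟨bi, hbi⟩ := getbi i u hu
        obtain ⟨bj, hbj⟩ := getbi j v hv
        have hbit : bi = true := by
          cases bi with
          | true => rfl
          | false =>
            have hwu : WS S.ar S.vs u false := hargs i u false hu hbi
            have := ws_false_down S p u f us (hts u (List.mem_of_getElem? hu)) hwu hup
            have := S.s_res f hfS
            simp_all
        have hbjt : bj = true := by
          cases bj with
          | true => rfl
          | false =>
            have hwv : WS S.ar S.vs v false := hargs j v false hv hbj
            have := ws_false_down S q' v g vss (hts v (List.mem_of_getElem? hv)) hwv hvq
            have := S.s_res g hgS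
            simp_all
        subst hbit; subst hbjt
        -- i = j
        have hij : i = j := by
          rcases hhmem with (hhd | hhs) | hhc
          · have := (S.d_sorts h hhd).1 true (List.mem_of_getElem? hbi); simp at this
          · exact count_le_one_get? (hone h hhs) hbi hbj
          · have hhc' : h = S.cons := by simpa using hhc
            subst hhc'
            rw [S.cons_ar] at hbi hbj
            have e1 : i = 1 := by
              rcases i with _ | _ | i <;> simp_all
            have e2 : j = 1 := by
              rcases j with _ | _ | j <;> simp_all
            omega
        subst hij
        rw [hu] at hv
        have huv : u = v := by simpa using hv
        subst huv
        have hwu : WS S.ar S.vs u true := hargs i u true hu hbi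
        rcases ih q' u true (hts u (List.mem_of_getElem? hu)) hwu f us g vss hup hfS hvq hgS with hc | hc
        · exact Or.inl (List.cons_prefix_cons.mpr ⟨rfl, hc⟩)
        · exact Or.inr (List.cons_prefix_cons.mpr ⟨rfl, hc⟩)

/-- an Rs-redex is an application headed by a stream symbol -/
lemma redex_stream_rooted (S : StreamSpec F) {s : Trm F} (h : IsRedex S.Rs s) :
    ∃ f us, s = app f us ∧ f ∈ S.Ss := by
  obtain ⟨l, r, σ, hlr, hs⟩ := h
  obtain ⟨f, args, hfS, hl, -⟩ := S.lhs_shape l r hlr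
  subst hl
  rw [subst] at hs
  exact ⟨f, _, hs, hfS⟩

end AuxOut

/-- with R_d = ∅ and at most one stream argument per stream symbol,
an outermost redex position of a ground stream term is a prefix of every redex
position of that term. -/
theorem outermost_redex_above_all {F : Type} (S : StreamSpec F)
    (hRd : S.Rd = ∅)
    (hone : ∀ f ∈ S.Ss, ((S.ar f).1.count true) ≤ 1)
    (t : Trm F) (hg : S.GroundStream t)
    (p : List ℕ) (hp : HasRedexAt S.Rs t p)
    (hout : ∀ q, StrictPref q p → ¬ HasRedexAt S.Rs t q) :
    ∀ q, HasRedexAt S.Rs t q → p <+: q := by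
  obtain ⟨hg1, hg2, hg3⟩ := hg
  obtain ⟨sp, hsp, hredp⟩ := hp
  obtain ⟨f, us, hspf, hfS⟩ := redex_stream_rooted S hredp
  intro q hq
  obtain ⟨sq, hsq, hredq⟩ := hq
  obtain ⟨g, vss, hsqg, hgS⟩ := redex_stream_rooted S hredq
  subst hspf; subst hsqg
  rcases stream_positions_chain S hone p q t true hg2 hg3 f us g vss hsp hfS hsq hgS with hc | hc
  · exact hc
  · by_cases hpq : q = p
    · subst hpq; exact List.prefix_refl _
    · exact absurd ⟨app g vss, hsq, hredq⟩ (hout q ⟨hc, hpq⟩)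
end

section
/- Let R be a left-linear TRS and ℓ → r ∈ R a rule. If σ and σ' are substitutions such that xσ rewrites to xσ' by a parallel step for every variable x, then ℓσ rewrites to ℓσ' by a parallel step followed by the root step ℓσ' → rσ', and also ℓσ → rσ rewrites to rσ' by a parallel step. (Parallel Moves Lemma, substitution form.) -/
open Trm

variable {F : Type}

section AuxPML

variable {F : Type}

lemma List.set_get?_self {α} (l : List α) {i : ℕ} {a : α} (h : l[i]? = some a) :
    l.set i a = l := by
  apply List.ext_getElem?; intro j
  rcases eq_or_ne j i with rfl | hne
  · rw [List.getElem?_set_self', h]; rfl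
  · simp [List.getElem?_set_ne hne.symm]

lemma List.get?_set_self' {α} (l : List α) {i : ℕ} (h : i < l.length) (a : α) :
    (l.set i a)[i]? = some a := by
  rw [List.getElem?_set_self', List.getElem?_eq_getElem h]; rfl

lemma List.get?_append_len {α} (as bs : List α) (b : α) :
    (as ++ b :: bs)[as.length]? = some b := by
  induction as with
  | nil => rfl
  | cons a as ih => simpa using ih

lemma List.set_append_len {α} (as bs : List α) (b c : α) :
    (as ++ b :: bs).set as.length c = as ++ c :: bs := by
  induction as with
  | nil => rfl
  | cons a as ih => simp [List.set, ih]

@[simp] lemma subst_var (σ : ℕ → Trm F) (n : ℕ) : subst σ (var n) = σ n := by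
  rw [subst]

@[simp] lemma subst_app (σ : ℕ → Trm F) (f : F) (ts : List (Trm F)) :
    subst σ (app f ts) = app f (ts.map (subst σ)) := by
  rw [subst]; congr 1; simp [List.attach_map_val]

lemma rewriteAt_lift {R : Set (Rule F)} {f : F} {ts : List (Trm F)} {i : ℕ}
    {t t' : Trm F} {p : List ℕ} (hi : ts[i]? = some t) (h : RewriteAt R t t' p) :
    RewriteAt R (app f ts) (app f (ts.set i t')) (i :: p) := by
  obtain ⟨l, r, σ, hR, hs, hr⟩ := h
  exact ⟨l, r, σ, hR, by simp [subtermAt, hi, hs], by simp [replaceAt, hi, hr]⟩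

lemma stepsAt_lift {R : Set (Rule F)} {f : F} {i : ℕ}
    {t t' : Trm F} {ps : List (List ℕ)} (h : StepsAt R t t' ps) :
    ∀ {ts : List (Trm F)}, ts[i]? = some t →
      StepsAt R (app f ts) (app f (ts.set i t')) (ps.map (i :: ·)) := by
  induction h with
  | nil t => intro ts ht; rw [List.set_get?_self ts ht]; exact StepsAt.nil _
  | @cons t t' t'' p ps h1 h2 ih =>
      intro ts ht
      have hlen : i < ts.length := by
        by_contra hc
        rw [List.getElem?_eq_none (le_of_not_gt hc)] at ht
        simp at ht
      have ht' : (ts.set i t')[i]? = some t' :=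
        List.get?_set_self' ts hlen t'
      have := ih ht'
      rw [List.set_set] at this
      exact StepsAt.cons (rewriteAt_lift ht h1) this

lemma indep_cons {i : ℕ} {p q : List ℕ} (h : Indep p q) : Indep (i :: p) (i :: q) :=
  ⟨fun hc => h.1 (List.cons_prefix_cons.mp hc).2,
   fun hc => h.2 (List.cons_prefix_cons.mp hc).2⟩

lemma indep_cons_ne {i j : ℕ} (h : i ≠ j) (p q : List ℕ) : Indep (i :: p) (j :: q) :=
  ⟨fun hc => h (List.cons_prefix_cons.mp hc).1,
   fun hc => h.symm (List.cons_prefix_cons.mp hc).1⟩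

lemma stepsAt_append {R : Set (Rule F)} {t t' t'' : Trm F} {ps qs : List (List ℕ)}
    (h1 : StepsAt R t t' ps) (h2 : StepsAt R t' t'' qs) : StepsAt R t t'' (ps ++ qs) := by
  induction h1 with
  | nil => exact h2
  | cons a _ ih => exact StepsAt.cons a (ih h2)

lemma parStep_args {R : Set (Rule F)} (f : F) :
    ∀ (bs cs as : List (Trm F)), bs.length = cs.length →
      (∀ (i : ℕ) b c, bs[i]? = some b → cs[i]? = some c → ParStep R b c) →
      ∃ ps : List (List ℕ), ps.Pairwise Indep ∧
        (∀ p ∈ ps, ∃ i q, p = i :: q ∧ as.length ≤ i) ∧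
        StepsAt R (app f (as ++ bs)) (app f (as ++ cs)) ps
  | [], [], as, _, _ => ⟨[], by simp, by simp, StepsAt.nil _⟩
  | [], c :: cs, as, hlen, _ => by simp at hlen
  | b :: bs, [], as, hlen, _ => by simp at hlen
  | b :: bs, c :: cs, as, hlen, hpt => by
      obtain ⟨qs, hqI, hqsteps⟩ := hpt 0 b c rfl rfl
      have hget : (as ++ b :: bs)[as.length]? = some b := List.get?_append_len ..
      have hlift := stepsAt_lift (f := f) hqsteps hget
      rw [List.set_append_len] at hlift
      obtain ⟨ps', hpI, hheads, hsteps'⟩ := parStep_args f bs cs (as ++ [c])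
        (by simpa using hlen) (fun i b' c' hb hc => hpt (i + 1) b' c' hb hc)
      refine ⟨qs.map (as.length :: ·) ++ ps', ?_, ?_, ?_⟩
      · rw [List.pairwise_append]
        refine ⟨hqI.map _ (fun a b hab => indep_cons hab), hpI, ?_⟩
        intro p hp p' hp'
        obtain ⟨q, _, rfl⟩ := List.mem_map.mp hp
        obtain ⟨i, q', rfl, hi⟩ := hheads p' hp'
        refine indep_cons_ne ?_ _ _
        simp at hi; omega
      · intro p hp
        rcases List.mem_append.mp hp with hp | hp
        · obtain ⟨q, _, rfl⟩ := List.mem_map.mp hp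
          exact ⟨as.length, q, rfl, le_refl _⟩
        · obtain ⟨i, q, rfl, hi⟩ := hheads _ hp
          exact ⟨i, q, rfl, by simp at hi; omega⟩
      · refine stepsAt_append hlift ?_
        simpa [List.append_assoc] using hsteps'

lemma parStep_subst {R : Set (Rule F)} {σ σ' : ℕ → Trm F}
    (h : ∀ x, ParStep R (σ x) (σ' x)) :
    ∀ t, ParStep R (subst σ t) (subst σ' t)
  | Trm.var n => by simpa using h n
  | Trm.app f ts => by
      have ih : ∀ t ∈ ts, ParStep R (subst σ t) (subst σ' t) :=
        fun t _ => parStep_subst h t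
      rw [subst_app, subst_app]
      obtain ⟨ps, h1, _, h3⟩ := parStep_args (R := R) f (ts.map (subst σ))
        (ts.map (subst σ')) [] (by simp)
        (fun i b c hb hc => by
          rw [List.getElem?_map] at hb hc
          cases hts : ts[i]? with
          | none => rw [hts] at hb; simp at hb
          | some t =>
              rw [hts] at hb hc
              obtain rfl : subst σ t = b := Option.some_injective _ hb
              obtain rfl : subst σ' t = c := Option.some_injective _ hc
              exact ih t (List.mem_of_getElem? hts))
      exact ⟨ps, h1, by simpa using h3⟩
decreasing_by
  have := List.sizeOf_lt_of_mem ‹t ∈ ts›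
  simp; omega

end AuxPML

/-- Parallel Moves Lemma, substitution form: if xσ ⇉ xσ' for every
variable x, then ℓσ ⇉ ℓσ' → rσ' and ℓσ → rσ ⇉ rσ'. -/
theorem parallel_moves_lemma {F : Type} (R : Set (Rule F))
    (l r : Trm F) (hrule : (l, r) ∈ R) (hll : (varList l).Nodup)
    (σ σ' : ℕ → Trm F) (h : ∀ x, ParStep R (σ x) (σ' x)) :
    ParStep R (subst σ l) (subst σ' l) ∧
    RewriteAt R (subst σ' l) (subst σ' r) [] ∧
    ParStep R (subst σ r) (subst σ' r) := by
  refine ⟨parStep_subst h l, ⟨l, r, σ', hrule, by rw [subtermAt], by rw [replaceAt]⟩, parStep_subst h r⟩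
end

section
/- Let R be an orthogonal TRS and suppose t rewrites at a non-outermost position q via rule ℓ_1 → r_1, where the redex at q is strictly below a redex at position q' < q via rule ℓ' → r'. Then after contracting the redex at q, the resulting term still has a redex at position q' via the same rule ℓ' → r'. (Contracting an inner redex of an orthogonal TRS preserves all outer redexes.) -/
open Trm

variable {F : Type}

namespace Trm
variable {F : Type}

theorem subst_app (σ : ℕ → Trm F) (f : F) (ts : List (Trm F)) :
    subst σ (app f ts) = app f (ts.map (subst σ)) := by
  rw [subst]
  congr 1
  simp

theorem varList_app (f : F) (ts : List (Trm F)) :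
    varList (app f ts) = ts.flatMap varList := by
  rw [varList]
  simp

end Trm
namespace Trm
variable {F : Type}

@[simp] theorem subtermAt_nil (t : Trm F) : subtermAt t [] = some t := by
  rw [subtermAt]
@[simp] theorem replaceAt_nil (t s : Trm F) : replaceAt t [] s = some s := by
  rw [replaceAt]

theorem subtermAt_append (p q : List ℕ) : ∀ t : Trm F,
    subtermAt t (p ++ q) = (subtermAt t p).bind (fun s => subtermAt s q) := by
  induction p with
  | nil => intro t; simp
  | cons i p ih =>
    intro t
    cases t with
    | var n => simp [subtermAt]
    | app f ts =>
      simp only [List.cons_append, subtermAt]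
      cases h : ts[i]? with
      | none => simp
      | some u => simp [ih u]

theorem replaceAt_isSome (s : Trm F) : ∀ (p : List ℕ) (t u : Trm F),
    subtermAt t p = some u → ∃ t', replaceAt t p s = some t' := by
  intro p
  induction p with
  | nil => intro t u _; exact ⟨s, by simp⟩
  | cons i p ih =>
    intro t u h
    cases t with
    | var n => simp [subtermAt] at h
    | app f ts =>
      simp only [subtermAt, Option.bind_eq_some_iff] at h
      obtain ⟨v, hv, hsub⟩ := h
      obtain ⟨t', ht'⟩ := ih v u hsub
      exact ⟨app f (ts.set i t'), by simp [replaceAt, hv, ht']⟩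

theorem replaceAt_append (s : Trm F) : ∀ (q p : List ℕ) (t t₂ u : Trm F),
    replaceAt t (q ++ p) s = some t₂ → subtermAt t q = some u →
    ∃ u', replaceAt u p s = some u' ∧ subtermAt t₂ q = some u' := by
  intro q
  induction q with
  | nil =>
    intro p t t₂ u hr hs
    simp at hs
    subst hs
    exact ⟨t₂, hr, by simp⟩
  | cons i q ih =>
    intro p t t₂ u hr hs
    cases t with
    | var n => simp [subtermAt] at hs
    | app f ts =>
      simp only [subtermAt, Option.bind_eq_some_iff] at hs
      obtain ⟨v, hv, hsub⟩ := hs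
      rw [List.cons_append, replaceAt, hv] at hr
      simp only [Option.bind_some, Option.map_eq_some_iff] at hr
      obtain ⟨w, hw, rfl⟩ := hr
      obtain ⟨u', h1, h2⟩ := ih p v w u hw hsub
      refine ⟨u', h1, ?_⟩
      obtain ⟨hlen, -⟩ := List.getElem?_eq_some_iff.mp hv
      have hts : (ts.set i w)[i]? = some w := by
        rw [List.getElem?_set_self]
        simpa using hlen
      simp only [subtermAt, hts, Option.bind_some, h2]
end Trm
namespace Trm
variable {F : Type}
theorem mem_varList_of_subtermAt_var : ∀ (p : List ℕ) (u : Trm F) (n : ℕ),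
    subtermAt u p = some (var n) → n ∈ varList u := by
  intro p
  induction p with
  | nil => intro u n h; simp at h; subst h; simp [varList]
  | cons i p ih =>
    intro u n h
    cases u with
    | var m => simp [subtermAt] at h
    | app f ts =>
      simp only [subtermAt, Option.bind_eq_some_iff] at h
      obtain ⟨v, hv, hsub⟩ := h
      rw [varList_app, List.mem_flatMap]
      exact ⟨v, List.mem_of_getElem? hv, ih v n hsub⟩

theorem subst_subtermAt (ς : ℕ → Trm F) : ∀ (p : List ℕ) (l s : Trm F),
    subtermAt l p = some s → subtermAt (subst ς l) p = some (subst ς s) := by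
  intro p
  induction p with
  | nil => intro l s h; simp at h; subst h; simp
  | cons i p ih =>
    intro l s h
    cases l with
    | var m => simp [subtermAt] at h
    | app f ts =>
      simp only [subtermAt, Option.bind_eq_some_iff] at h
      obtain ⟨v, hv, hsub⟩ := h
      rw [subst_app]
      have : (ts.map (subst ς))[i]? = some (subst ς v) := by
        simp [List.getElem?_map, hv]
      simp only [subtermAt, this, Option.bind_some]
      exact ih v s hsub

theorem subst_congr (σ σ' : ℕ → Trm F) :
    ∀ u : Trm F, (∀ m ∈ varList u, σ m = σ' m) → subst σ u = subst σ' u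
  | Trm.var n, h => by
      rw [subst, subst]
      exact h n (by simp [varList])
  | Trm.app f ts, h => by
      rw [subst_app, subst_app]
      congr 1
      apply List.map_congr_left
      intro u hu
      exact subst_congr σ σ' u (fun m hm => h m (by
        rw [varList_app, List.mem_flatMap]; exact ⟨u, hu, hm⟩))
decreasing_by have := List.sizeOf_lt_of_mem hu; simp; omega

/-- Decomposition of a position in an instance of `l`. -/
theorem subterm_subst_cases (ς : ℕ → Trm F) : ∀ (p : List ℕ) (l u : Trm F),
    subtermAt (subst ς l) p = some u →
    (∃ s, subtermAt l p = some s ∧ ¬ IsVar s) ∨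
    (∃ p₁ p₂ n, p = p₁ ++ p₂ ∧ subtermAt l p₁ = some (var n) ∧
      subtermAt (ς n) p₂ = some u) := by
  intro p
  induction p with
  | nil =>
    intro l u h
    cases l with
    | var n => exact Or.inr ⟨[], [], n, rfl, by simp, by simpa [subst] using h⟩
    | app f ts => exact Or.inl ⟨app f ts, by simp, by simp [IsVar]⟩
  | cons i p ih =>
    intro l u h
    cases l with
    | var n => exact Or.inr ⟨[], i :: p, n, rfl, by simp, by simpa [subst] using h⟩
    | app f ts =>
      rw [subst_app] at h
      simp only [subtermAt, Option.bind_eq_some_iff] at h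
      obtain ⟨v, hv, hsub⟩ := h
      rw [List.getElem?_map] at hv
      cases hts : ts[i]? with
      | none => rw [hts] at hv; simp at hv
      | some w =>
        rw [hts] at hv
        simp only [Option.map_some, Option.some.injEq] at hv
        subst hv
        rcases ih w u hsub with ⟨s, hs1, hs2⟩ | ⟨p₁, p₂, n, rfl, h1, h2⟩
        · refine Or.inl ⟨s, ?_, hs2⟩
          simp only [subtermAt, hts, Option.bind_some]
          exact hs1
        · refine Or.inr ⟨i :: p₁, p₂, n, rfl, ?_, h2⟩
          simp only [subtermAt, hts, Option.bind_some]
          exact h1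
end Trm
namespace Trm
variable {F : Type}

theorem replaceAt_subst_var (ς : ℕ → Trm F) (s : Trm F) :
    ∀ (p₁ : List ℕ) (l : Trm F) (n : ℕ) (p₂ : List ℕ) (w : Trm F),
    (varList l).Nodup → subtermAt l p₁ = some (var n) →
    replaceAt (ς n) p₂ s = some w →
    replaceAt (subst ς l) (p₁ ++ p₂) s
      = some (subst (Function.update ς n w) l) := by
  intro p₁
  induction p₁ with
  | nil =>
    intro l n p₂ w hnd hsub hrep
    simp only [subtermAt_nil, Option.some.injEq] at hsub
    subst hsub
    simp only [List.nil_append, subst]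
    rw [Function.update_self]
    exact hrep
  | cons i p₁ ih =>
    intro l n p₂ w hnd hsub hrep
    cases l with
    | var m => simp [subtermAt] at hsub
    | app f ts =>
      simp only [subtermAt, Option.bind_eq_some_iff] at hsub
      obtain ⟨v, hv, hsubv⟩ := hsub
      obtain ⟨hlen, -⟩ := List.getElem?_eq_some_iff.mp hv
      -- nodup facts
      rw [varList_app] at hnd
      rw [List.nodup_flatMap] at hnd
      obtain ⟨hall, hpw⟩ := hnd
      have hnv : n ∈ varList v := mem_varList_of_subtermAt_var p₁ v n hsubv
      have hvi : ts[i] = v := by rw [List.getElem?_eq_getElem hlen] at hv; simpa using hv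
      have hndv : (varList v).Nodup := hall v (hvi ▸ List.getElem_mem hlen)
      have key : ∀ j (hj : j < ts.length), j ≠ i → n ∉ varList (ts[j]'hj) := by
        intro j hj hji
        have hpair : ∀ a b (ha : a < ts.length) (hb : b < ts.length), a < b →
            (Function.onFun List.Disjoint varList) ts[a] ts[b] :=
          fun a b ha hb hab => (List.pairwise_iff_getElem.mp hpw) a b ha hb hab
        rcases lt_or_gt_of_ne hji with h | h
        · have := hpair j i hj hlen h
          rw [hvi] at this
          exact fun hmem => (this hmem) hnv
        · have := hpair i j hlen hj h
          rw [hvi] at this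
          exact fun hmem => (this hnv) hmem
      have ihv := ih v n p₂ w hndv hsubv hrep
      rw [subst_app, List.cons_append]
      have hmap : (ts.map (subst ς))[i]? = some (subst ς v) := by
          rw [List.getElem?_map, hv]; rfl
      rw [replaceAt, hmap]
      simp only [Option.bind_some, ihv, Option.map_some, Option.some.injEq]
      rw [subst_app]
      congr 1
      apply List.ext_getElem?
      intro j
      rcases eq_or_ne j i with rfl | hji
      · rw [List.getElem?_set_self (by simpa using hlen), List.getElem?_map, hv]
        rfl
      · rw [List.getElem?_set_ne (Ne.symm hji), List.getElem?_map, List.getElem?_map]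
        rcases Nat.lt_or_ge j ts.length with hj | hj
        · rw [List.getElem?_eq_getElem hj]
          simp only [Option.map_some, Option.some.injEq]
          apply subst_congr
          intro m hm
          have : m ≠ n := fun h => key j hj hji (h ▸ hm)
          rw [Function.update_of_ne this]
        · rw [List.getElem?_eq_none hj]; rfl

end Trm

/-- contracting an inner redex of an orthogonal TRS preserves all
outer redexes (with the same rule). -/
theorem inner_step_preserves_outer_redex {F : Type} (R : Set (Rule F))
    (ho : Orthogonal R)
    (l' r' l₁ r₁ : Trm F) (h' : (l', r') ∈ R) (h₁ : (l₁, r₁) ∈ R)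
    (t t₂ : Trm F) (q' q : List ℕ) (ς σ₁ : ℕ → Trm F)
    (houter : subtermAt t q' = some (subst ς l'))
    (hbelow : StrictPref q' q)
    (hinner : subtermAt t q = some (subst σ₁ l₁))
    (hrepl : replaceAt t q (subst σ₁ r₁) = some t₂) :
    ∃ τ, subtermAt t₂ q' = some (subst τ l') := by
  obtain ⟨⟨p, rfl⟩, hne⟩ := hbelow
  have hp : p ≠ [] := by rintro rfl; simp at hne
  obtain ⟨u', hu1, hu2⟩ := replaceAt_append (subst σ₁ r₁) q' p t t₂ (subst ς l') hrepl houter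
  have hsub : subtermAt (subst ς l') p = some (subst σ₁ l₁) := by
    rw [subtermAt_append, houter] at hinner
    simpa using hinner
  rcases subterm_subst_cases ς p l' (subst σ₁ l₁) hsub with ⟨s, hs1, hs2⟩ | ⟨p₁, p₂, n, rfl, h1, h2⟩
  · exfalso
    have := subst_subtermAt ς p l' s hs1
    rw [hsub] at this
    have heq : subst ς s = subst σ₁ l₁ := by simpa using this.symm
    obtain ⟨hp0, -, -⟩ := ho.2 l' r' l₁ r₁ h' h₁ p s hs1 hs2 ς σ₁ heq
    exact hp hp0
  · obtain ⟨w, hw⟩ := replaceAt_isSome (subst σ₁ r₁) p₂ (ς n) (subst σ₁ l₁) h2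
    have hlin : (varList l').Nodup := ho.1 l' r' h'
    have := replaceAt_subst_var ς (subst σ₁ r₁) p₁ l' n p₂ w hlin h1 hw
    rw [hu1] at this
    refine ⟨Function.update ς n w, ?_⟩
    rw [hu2]
    simpa using this
end

section
/- The TRS with rules c → f(c) and f(x : σ) → c (over a signature with constant c, unary-on-stream symbol f, and binary constructor ':') is top terminating — no term admits an infinite reduction with infinitely many root steps — but the ground term c is not productive: c does not rewrite to any term with root symbol ':'. Hence top termination does not imply productivity. -/
open Trm

variable {F : Type}

/-- The signature for the system c → f(c), f(x : σ) → c. -/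
inductive F16 : Type
  | c | f | cons

/-- The rules c → f(c) and f(x : σ) → c. -/
def R16 : Set (Rule F16) :=
  {(Trm.app F16.c [], Trm.app F16.f [Trm.app F16.c []]),
   (Trm.app F16.f [Trm.app F16.cons [Trm.var 0, Trm.var 1]], Trm.app F16.c [])}

section Aux
open Trm

def NC (t : Trm F16) : Prop := SymOver {g | g ≠ F16.cons} t

lemma subst_c (σ : ℕ → Trm F16) : subst σ (Trm.app F16.c []) = Trm.app F16.c [] := by
  simp [Trm.subst]

lemma subst_fc (σ : ℕ → Trm F16) :
    subst σ (Trm.app F16.f [Trm.app F16.c []]) = Trm.app F16.f [Trm.app F16.c []] := by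
  simp [Trm.subst]

lemma subst_l2 (σ : ℕ → Trm F16) :
    subst σ (Trm.app F16.f [Trm.app F16.cons [Trm.var 0, Trm.var 1]]) =
      Trm.app F16.f [Trm.app F16.cons [σ 0, σ 1]] := by
  simp [Trm.subst]

lemma mem_R16 {l r : Trm F16} (h : (l, r) ∈ R16) :
    (l = Trm.app F16.c [] ∧ r = Trm.app F16.f [Trm.app F16.c []]) ∨
    (l = Trm.app F16.f [Trm.app F16.cons [Trm.var 0, Trm.var 1]] ∧ r = Trm.app F16.c []) := by
  rcases h with h | h <;> simp_all [Prod.ext_iff]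

lemma NC_c : NC (Trm.app F16.c []) := by
  refine SymOver.app _ _ (by simp) (by simp)

lemma NC_fc : NC (Trm.app F16.f [Trm.app F16.c []]) := by
  refine SymOver.app _ _ (by simp) ?_
  intro t ht; simp at ht; subst ht; exact NC_c

lemma not_NC_cons {u v : Trm F16} : ¬ NC (Trm.app F16.cons [u, v]) := by
  intro h; cases h with
  | app _ _ hf _ => exact hf rfl

lemma not_NC_fcons {u v : Trm F16} : ¬ NC (Trm.app F16.f [Trm.app F16.cons [u, v]]) := by
  intro h; cases h with
  | app _ _ _ hall => exact not_NC_cons (hall (Trm.app F16.cons [u, v]) (by simp))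

lemma NC_subtermAt : ∀ (p : List ℕ) (t s : Trm F16),
    NC t → subtermAt t p = some s → NC s := by
  intro p
  induction p with
  | nil => intro t s h hs; simp [Trm.subtermAt] at hs; subst hs; exact h
  | cons i p ih =>
    intro t s h hs
    cases t with
    | var n => simp [Trm.subtermAt] at hs
    | app f ts =>
      simp only [Trm.subtermAt, Option.bind_eq_some_iff] at hs
      obtain ⟨t₀, ht₀, hsub⟩ := hs
      cases h with
      | app _ _ hf hall =>
        exact ih t₀ s (hall t₀ (List.mem_of_getElem? ht₀)) hsub

lemma NC_replaceAt : ∀ (p : List ℕ) (t s t' : Trm F16),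
    NC t → NC s → replaceAt t p s = some t' → NC t' := by
  intro p
  induction p with
  | nil => intro t s t' _ hs h; simp [Trm.replaceAt] at h; subst h; exact hs
  | cons i p ih =>
    intro t s t' h hs hrep
    cases t with
    | var n => simp [Trm.replaceAt] at hrep
    | app f ts =>
      simp only [Trm.replaceAt, Option.bind_eq_some_iff, Option.map_eq_some_iff] at hrep
      obtain ⟨t₀, ht₀, u', hu', ht'⟩ := hrep
      subst ht'
      cases h with
      | app _ _ hf hall =>
        refine SymOver.app _ _ hf ?_
        intro x hx
        rcases List.mem_or_eq_of_mem_set hx with hx | hx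
        · exact hall x hx
        · subst hx; exact ih t₀ s x (hall t₀ (List.mem_of_getElem? ht₀)) hs hu'

lemma NC_rewriteAt {t t' : Trm F16} {p : List ℕ} (h : NC t)
    (hr : RewriteAt R16 t t' p) : NC t' := by
  obtain ⟨l, r, σ, hmem, hsub, hrep⟩ := hr
  rcases mem_R16 hmem with ⟨rfl, rfl⟩ | ⟨rfl, rfl⟩
  · exact NC_replaceAt p t _ t' h (by rw [subst_fc]; exact NC_fc) hrep
  · exact absurd (NC_subtermAt p t _ h hsub) (by rw [subst_l2]; exact not_NC_fcons)

lemma NC_star {t t' : Trm F16} (h : NC t) (hr : RewriteStar R16 t t') : NC t' := by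
  induction hr with
  | refl => exact h
  | tail _ hstep ih => obtain ⟨p, hp⟩ := hstep; exact NC_rewriteAt ih hp

lemma c_step {t' : Trm F16} {p : List ℕ}
    (h : RewriteAt R16 (Trm.app F16.c []) t' p) :
    t' = Trm.app F16.f [Trm.app F16.c []] := by
  obtain ⟨l, r, σ, hmem, hsub, hrep⟩ := h
  cases p with
  | nil =>
    simp [Trm.subtermAt] at hsub
    simp [Trm.replaceAt] at hrep
    rcases mem_R16 hmem with ⟨rfl, rfl⟩ | ⟨rfl, rfl⟩
    · rw [← hrep, subst_fc]
    · rw [subst_l2] at hsub; simp at hsub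
  | cons i q =>
    simp [Trm.subtermAt] at hsub

lemma f_step {u t' : Trm F16} {p : List ℕ} (hNC : NC (Trm.app F16.f [u]))
    (h : RewriteAt R16 (Trm.app F16.f [u]) t' p) :
    ∃ u', t' = Trm.app F16.f [u'] := by
  obtain ⟨l, r, σ, hmem, hsub, hrep⟩ := h
  cases p with
  | nil =>
    simp [Trm.subtermAt] at hsub
    rcases mem_R16 hmem with ⟨rfl, rfl⟩ | ⟨rfl, rfl⟩
    · rw [subst_c] at hsub; simp at hsub
    · rw [subst_l2] at hsub
      obtain ⟨h1, h2⟩ := Trm.app.inj hsub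
      simp at h2; subst h2
      exact absurd hNC not_NC_fcons
  | cons i q =>
    simp only [Trm.replaceAt, Option.bind_eq_some_iff, Option.map_eq_some_iff] at hrep
    obtain ⟨t₀, ht₀, u', hu', ht'⟩ := hrep
    subst ht'
    cases i with
    | zero => exact ⟨u', by simp⟩
    | succ j => simp at ht₀

end Aux

/-- the TRS {c → f(c), f(x : σ) → c} is top terminating but c is not
productive: c does not rewrite to any ':'-rooted term. Hence top termination does
not imply productivity. -/
theorem top_termination_not_productivity :
    (¬ ∃ (ts : ℕ → Trm F16) (ps : ℕ → List ℕ),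
        (∀ i, RewriteAt R16 (ts i) (ts (i + 1)) (ps i)) ∧
        (∀ N, ∃ i, N ≤ i ∧ ps i = [])) ∧
    (¬ ∃ u t', RewriteStar R16 (Trm.app F16.c []) (Trm.app F16.cons [u, t'])) := by
  constructor
  · rintro ⟨ts, ps, hsteps, hinf⟩
    obtain ⟨i₀, -, hp0⟩ := hinf 0
    have hroot := hsteps i₀
    rw [hp0] at hroot
    obtain ⟨l, r, σ, hmem, hsub, hrep⟩ := hroot
    simp only [Trm.subtermAt, Option.some.injEq] at hsub
    simp only [Trm.replaceAt, Option.some.injEq] at hrep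
    have hj : ∃ j, ts j = Trm.app F16.f [Trm.app F16.c []] := by
      rcases mem_R16 hmem with ⟨rfl, rfl⟩ | ⟨rfl, rfl⟩
      · exact ⟨i₀ + 1, by rw [← hrep, subst_fc]⟩
      · refine ⟨i₀ + 2, ?_⟩
        have hs1 := hsteps (i₀ + 1)
        rw [show ts (i₀ + 1) = Trm.app F16.c [] from by rw [← hrep, subst_c]] at hs1
        exact c_step hs1
    obtain ⟨j, hj⟩ := hj
    have hshape : ∀ k, ∃ u, ts (j + k) = Trm.app F16.f [u] ∧ NC (ts (j + k)) := by
      intro k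
      induction k with
      | zero =>
        refine ⟨Trm.app F16.c [], ?_, ?_⟩ <;> simp only [Nat.add_zero, hj]
        exact NC_fc
      | succ k ih =>
        obtain ⟨u, hu, hNC⟩ := ih
        have hstep := hsteps (j + k)
        rw [hu] at hstep hNC
        have hNC' : NC (ts (j + k + 1)) := NC_rewriteAt hNC hstep
        obtain ⟨u', hu'⟩ := f_step hNC hstep
        exact ⟨u', by rw [show j + (k + 1) = j + k + 1 from by omega]; exact ⟨hu', hNC'⟩⟩
    obtain ⟨i, hij, hpi⟩ := hinf j
    obtain ⟨u, hu, hNC⟩ := hshape (i - j)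
    rw [show j + (i - j) = i from by omega] at hu hNC
    have hstep := hsteps i
    rw [hpi] at hstep
    obtain ⟨l', r', σ', hmem', hsub', hrep'⟩ := hstep
    simp only [Trm.subtermAt, Option.some.injEq] at hsub'
    rw [hu] at hsub' hNC
    rcases mem_R16 hmem' with ⟨rfl, rfl⟩ | ⟨rfl, rfl⟩
    · rw [subst_c] at hsub'; simp at hsub'
    · rw [subst_l2] at hsub'
      obtain ⟨-, h2⟩ := Trm.app.inj hsub'
      simp only [List.cons.injEq, and_true] at h2
      rw [h2] at hNC
      exact not_NC_fcons hNC
  · rintro ⟨u, t', hstar⟩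
    exact not_NC_cons (NC_star NC_c hstar)
end
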